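/- arXiv:1502.07823 — 5 statements merged into one kernel-verified Lean document; each statement's English description precedes it below -/
import Mathlib

section
/- In a stable matching instance with strict preferences, the set of agents who are unmatched is the same in every stable matching. -/
open List

/-- A stable-matching instance: each agent has a strict preference order
(a duplicate-free list, earlier = more preferred) over a subset of the other side. -/
structure SMInstance (M W : Type*) where
  mpref : M → List W
  wpref : W → List M
  mnodup : ∀ m, (mpref m).Nodup
  wnodup : ∀ w, (wpref w).Nodup

/-- A matching: a pairing of men and women (agents may be unmatched),
involutive on matched pairs. -/
structure Matching (M W : Type*) where
  μm : M → Option W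
  μw : W → Option M
  consistent : ∀ m w, μm m = some w ↔ μw w = some m

section Defs

variable {M W : Type*} [DecidableEq M] [DecidableEq W]

/-- Man `m` strictly prefers woman `w` to the (possibly empty) assignment `o`. -/
def SMInstance.mPref (I : SMInstance M W) (m : M) (w : W) : Option W → Prop
  | some w' => w ∈ I.mpref m ∧ (w' ∉ I.mpref m ∨ (I.mpref m).idxOf w < (I.mpref m).idxOf w')
  | none => w ∈ I.mpref m

/-- Woman `w` strictly prefers man `m` to the (possibly empty) assignment `o`. -/
def SMInstance.wPref (I : SMInstance M W) (w : W) (m : M) : Option M → Prop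
  | some m' => m ∈ I.wpref w ∧ (m' ∉ I.wpref w ∨ (I.wpref w).idxOf m < (I.wpref w).idxOf m')
  | none => m ∈ I.wpref w

/-- Man `m` weakly prefers assignment `o₁` to assignment `o₂`. -/
def SMInstance.mWeak (I : SMInstance M W) (m : M) (o₁ o₂ : Option W) : Prop :=
  o₁ = o₂ ∨ ∃ w, o₁ = some w ∧ I.mPref m w o₂

/-- Woman `w` weakly prefers assignment `o₁` to assignment `o₂`. -/
def SMInstance.wWeak (I : SMInstance M W) (w : W) (o₁ o₂ : Option M) : Prop :=
  o₁ = o₂ ∨ ∃ m, o₁ = some m ∧ I.wPref w m o₂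

def IndivRational (I : SMInstance M W) (μ : Matching M W) : Prop :=
  ∀ m w, μ.μm m = some w → w ∈ I.mpref m ∧ m ∈ I.wpref w

def BlockingPair (I : SMInstance M W) (μ : Matching M W) (m : M) (w : W) : Prop :=
  μ.μm m ≠ some w ∧ I.mPref m w (μ.μm m) ∧ I.wPref w m (μ.μw w)

def IsStable (I : SMInstance M W) (μ : Matching M W) : Prop :=
  IndivRational I μ ∧ ∀ m w, ¬ BlockingPair I μ m w

/-- The men-optimal stable matching (= output of men-proposing Gale–Shapley). -/
def IsMenOptimal (I : SMInstance M W) (μ : Matching M W) : Prop :=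
  IsStable I μ ∧ ∀ μ', IsStable I μ' → ∀ m, I.mWeak m (μ.μm m) (μ'.μm m)

/-- The women-optimal stable matching. -/
def IsWomenOptimal (I : SMInstance M W) (μ : Matching M W) : Prop :=
  IsStable I μ ∧ ∀ μ', IsStable I μ' → ∀ w, I.wWeak w (μ.μw w) (μ'.μw w)

/-- `I'` arises from `I` by arbitrary misreports of the women in `L`
(all men and all women outside `L` are truthful). -/
def GeneralManip (I I' : SMInstance M W) (L : Set W) : Prop :=
  I'.mpref = I.mpref ∧ ∀ w ∉ L, I'.wpref w = I.wpref w

/-- `I'` arises from `I` by truncation (prefix) misreports of the women in `L`. -/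
def TruncManip (I I' : SMInstance M W) (L : Set W) : Prop :=
  GeneralManip I I' L ∧ ∀ w ∈ L, (I'.wpref w) <+: (I.wpref w)

/-- `I'` arises from `I` by permutation misreports of the women in `L`. -/
def PermManip (I I' : SMInstance M W) (L : Set W) : Prop :=
  GeneralManip I I' L ∧ ∀ w ∈ L, (I'.wpref w).Perm (I.wpref w)

/-- Woman `w` is strictly better off in `μ₁` than in `μ₂` (true preferences). -/
def wStrictBetter (I : SMInstance M W) (w : W) (μ₁ μ₂ : Matching M W) : Prop :=
  ∃ m, μ₁.μw w = some m ∧ I.wPref w m (μ₂.μw w)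

/-- The set `δ(w)` of suitors of `w` at matching `μ`: the men who prefer `w`
to their own partner in `μ`. -/
def suitorSet (I : SMInstance M W) (μ : Matching M W) (w : W) : Set M :=
  {m | I.mPref m w (μ.μm m)}

/-- The suitor graph of Kobayashi–Matsui, on vertices `M ⊕ W ⊕ {s}`. -/
inductive SuitorEdge (I : SMInstance M W) (L : Set W) (μ : Matching M W) :
    M ⊕ W ⊕ Unit → M ⊕ W ⊕ Unit → Prop
  | partner_wm (w : W) (m : M) : μ.μw w = some m →
      SuitorEdge I L μ (Sum.inr (Sum.inl w)) (Sum.inl m)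
  | partner_mw (w : W) (m : M) : μ.μw w = some m →
      SuitorEdge I L μ (Sum.inl m) (Sum.inr (Sum.inl w))
  | suitor_manip (w : W) (m : M) : w ∈ L → m ∈ suitorSet I μ w →
      SuitorEdge I L μ (Sum.inl m) (Sum.inr (Sum.inl w))
  | suitor_honest (w : W) (m : M) : w ∉ L → m ∈ suitorSet I μ w →
      (∀ m' ∈ suitorSet I μ w, m' ≠ m → (I.wpref w).idxOf m < (I.wpref w).idxOf m') →
      SuitorEdge I L μ (Sum.inl m) (Sum.inr (Sum.inl w))
  | fromSource (w : W) : suitorSet I μ w = ∅ →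
      SuitorEdge I L μ (Sum.inr (Sum.inr ())) (Sum.inr (Sum.inl w))

/-- Reachability in the suitor graph. -/
abbrev SReach (I : SMInstance M W) (L : Set W) (μ : Matching M W) :
    (M ⊕ W ⊕ Unit) → (M ⊕ W ⊕ Unit) → Prop :=
  Relation.ReflTransGen (SuitorEdge I L μ)

/-- A reduced table (shortlists) for instance `I`: sublists of the true lists,
with mutual membership, where each man is engaged to the head of his reduced list,
each woman to the last man of hers, and every removed man is worse for the woman
than her current partner. -/
structure ReducedTable (I : SMInstance M W) where
  rm : M → List W
  rw : W → List M
  rmSub : ∀ m, (rm m).Sublist (I.mpref m)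
  rwSub : ∀ w, (rw w).Sublist (I.wpref w)
  mem_iff : ∀ m w, w ∈ rm m ↔ m ∈ rw w
  engaged : ∀ m w, (rm m).head? = some w ↔ (rw w).getLast? = some m
  removed_worse : ∀ m w p, m ∈ I.wpref w → m ∉ rw w → (rw w).getLast? = some p →
      (I.wpref w).idxOf p < (I.wpref w).idxOf m

/-- A rotation: a cyclic sequence of (distinct) men `m₀,…,m_{r-1}`
together with their current partners `w₀,…,w_{r-1}`. -/
structure Rot (M W : Type*) where
  r : ℕ
  hr : 2 ≤ r
  ms : Fin r → M
  ws : Fin r → W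
  inj : Function.Injective ms

/-- Cyclic successor of an index of a rotation. -/
def Rot.nxt (R : Rot M W) (i : Fin R.r) : Fin R.r :=
  ⟨((i : ℕ) + 1) % R.r, Nat.mod_lt _ (by have := R.hr; omega)⟩

/-- The reduced list of woman `w` determined by the stable matching `μ`:
the men weakly preferred to her current partner. -/
def reducedListW (I : SMInstance M W) (μ : Matching M W) (w : W) : List M :=
  match μ.μw w with
  | some p => (I.wpref w).filter (fun m => decide ((I.wpref w).idxOf m ≤ (I.wpref w).idxOf p))
  | none => []

/-- The reduced list of man `m` determined by the stable matching `μ`. -/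
def reducedListM (I : SMInstance M W) (μ : Matching M W) (m : M) : List W :=
  (I.mpref m).filter (fun w => decide (m ∈ reducedListW I μ w))

/-- The rotation `R` is exposed in (the reduced table of) the matching `μ`:
`w_i` is first and `w_{i+1}` second on `m_i`'s reduced list. -/
def Exposed (I : SMInstance M W) (μ : Matching M W) (R : Rot M W) : Prop :=
  ∀ i, (reducedListM I μ (R.ms i)).head? = some (R.ws i) ∧
       (reducedListM I μ (R.ms i))[1]? = some (R.ws (R.nxt i))

/-- `μ'` is the matching obtained from `μ` by eliminating the rotation `R`:
each `m_i` is now matched with `w_{i+1}`, everyone else is unchanged. -/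
def ElimStep (R : Rot M W) (μ μ' : Matching M W) : Prop :=
  (∀ i, μ'.μm (R.ms i) = some (R.ws (R.nxt i))) ∧
  ∀ m, (∀ i, m ≠ R.ms i) → μ'.μm m = μ.μm m

/-- `ElimSeq I μ S μ'`: the matching `μ'` is obtained from `μ` by successively
eliminating the (exposed-at-the-time) rotations of the set `S`. -/
inductive ElimSeq (I : SMInstance M W) : Matching M W → Set (Rot M W) → Matching M W → Prop
  | refl (μ : Matching M W) : ElimSeq I μ ∅ μ
  | step {μ μ' μ'' : Matching M W} {R : Rot M W} {S : Set (Rot M W)} :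
      Exposed I μ R → ElimStep R μ μ' → ElimSeq I μ' S μ'' → ElimSeq I μ (insert R S) μ''

/-- The rotation `R` moves man `m` from woman `w` to woman `w'`. -/
def Moves (R : Rot M W) (m : M) (w w' : W) : Prop :=
  ∃ i, R.ms i = m ∧ R.ws i = w ∧ R.ws (R.nxt i) = w'

/-- `R₁` explicitly precedes `R₂`: they share a man `m` such that `R₁` moves `m`
to some woman `w` and `R₂` moves `m` away from `w`. -/
def ExplicitPrec (R₁ R₂ : Rot M W) : Prop :=
  ∃ m w w₁ w₂, Moves R₁ m w₁ w ∧ Moves R₂ m w w₂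

/-- The precedence relation `≺`: transitive closure of explicit precedence. -/
def Prec (R₁ R₂ : Rot M W) : Prop :=
  Relation.TransGen ExplicitPrec R₁ R₂

/-- `R` is a rotation of the instance `I`: it is exposed at some matching
obtained from the men-optimal matching by eliminating rotations. -/
def IsRotOf (I : SMInstance M W) (R : Rot M W) : Prop :=
  ∃ μ0 S μ', IsMenOptimal I μ0 ∧ ElimSeq I μ0 S μ' ∧ Exposed I μ' R

/-- A closed (downward-closed under `≺`) set of rotations of the instance `I`. -/
def IsClosedSet (I : SMInstance M W) (𝓡 : Set (Rot M W)) : Prop :=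
  (∀ R ∈ 𝓡, IsRotOf I R) ∧ ∀ R ∈ 𝓡, ∀ R', IsRotOf I R' → Prec R' R → R' ∈ 𝓡

/-- The closed set `𝓡` can be eliminated: the matching obtained by eliminating it
is stable w.r.t. the true profile and is the men-optimal stable matching of some
profile in which only the women of `L` misreport. -/
def CanEliminate (I : SMInstance M W) (L : Set W) (𝓡 : Set (Rot M W)) : Prop :=
  ∃ μ0 μ', IsMenOptimal I μ0 ∧ ElimSeq I μ0 𝓡 μ' ∧ IsStable I μ' ∧
    ∃ I', GeneralManip I I' L ∧ IsMenOptimal I' μ'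

/-- `R` is a maximal rotation of the set `𝓡`. -/
def MaxRot (𝓡 : Set (Rot M W)) (R : Rot M W) : Prop :=
  R ∈ 𝓡 ∧ ∀ R' ∈ 𝓡, ¬ Prec R R'

/-- Whether man `m` proposes to woman `w` in the men-proposing Gale–Shapley run
whose outcome is `μ` (he proposes to every woman he weakly prefers to his final partner). -/
def proposedToB (I : SMInstance M W) (μ : Matching M W) (m : M) (w : W) : Bool :=
  decide (w ∈ I.mpref m) &&
    (match μ.μm m with
     | none => true
     | some w' => decide ((I.mpref m).idxOf w ≤ (I.mpref m).idxOf w'))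

/-- The proposal list `Pro(w)`: all men who proposed to `w`, ordered as in her stated list. -/
def proposals (I : SMInstance M W) (μ : Matching M W) (w : W) : List M :=
  (I.wpref w).filter (fun m => proposedToB I μ m w)

/-- `μ` is feasible for the permutation-manipulation game of coalition `L`. -/
def FeasibleM (I : SMInstance M W) (L : Set W) (μ : Matching M W) : Prop :=
  IsStable I μ ∧ ∃ I', PermManip I I' L ∧ IsMenOptimal I' μ

/-- `μ` is Pareto-optimal among feasible matchings (for the women). -/
def ParetoOptimal (I : SMInstance M W) (L : Set W) (μ : Matching M W) : Prop :=
  FeasibleM I L μ ∧ ¬∃ μ', FeasibleM I L μ' ∧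
    (∀ w, I.wWeak w (μ'.μw w) (μ.μw w)) ∧ (∃ w, wStrictBetter I w μ' μ)

/-- The reported profile `I'` with induced matching `μ` is a super-strong Nash
equilibrium of the permutation-manipulation game under the feasibility assumption. -/
def SuperStrongNE (I : SMInstance M W) (L : Set W) (I' : SMInstance M W)
    (μ : Matching M W) : Prop :=
  PermManip I I' L ∧ IsMenOptimal I' μ ∧ IsStable I μ ∧
  ∀ (Ls : Set W), Ls ⊆ L → ∀ I'' μ'',
    PermManip I I'' L → (∀ w ∉ Ls, I''.wpref w = I'.wpref w) →
    IsMenOptimal I'' μ'' → IsStable I μ'' →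
    ¬((∀ l ∈ Ls, I.wWeak l (μ''.μw l) (μ.μw l)) ∧ ∃ l ∈ Ls, wStrictBetter I l μ'' μ)

end Defs


section Aux

variable {M W : Type*} [DecidableEq M] [DecidableEq W]

lemma key_step (I : SMInstance M W) (μ₁ μ₂ : Matching M W)
    (h₁ : IsStable I μ₁) (h₂ : IsStable I μ₂)
    (m : M) (w' : W) (hm1 : μ₁.μm m = some w') (hpref : I.mPref m w' (μ₂.μm m)) :
    ∃ m'', μ₂.μw w' = some m'' ∧ ∃ w₂, μ₁.μm m'' = some w₂ ∧ I.mPref m'' w₂ (μ₂.μm m'') := by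
  obtain ⟨hwmem, hmmem⟩ := h₁.1 m w' hm1
  have hne2 : μ₂.μm m ≠ some w' := by
    intro h; rw [h] at hpref
    simp [SMInstance.mPref] at hpref
  have hnw : ¬ I.wPref w' m (μ₂.μw w') := fun h => h₂.2 m w' ⟨hne2, hpref, h⟩
  cases h2w : μ₂.μw w' with
  | none =>
      rw [h2w] at hnw
      exact absurd hmmem (by simpa [SMInstance.wPref] using hnw)
  | some m'' =>
      rw [h2w] at hnw
      simp only [SMInstance.wPref, not_and, not_or, not_lt, not_not] at hnw
      obtain ⟨hm''mem, hle⟩ := hnw hmmem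
      have h2m'' : μ₂.μm m'' = some w' := (μ₂.consistent m'' w').mpr h2w
      have hm''ne : m'' ≠ m := fun h => hne2 (h ▸ h2m'')
      have hidx : (I.wpref w').idxOf m'' < (I.wpref w').idxOf m :=
        lt_of_le_of_ne hle (fun h => hm''ne ((List.idxOf_inj hm''mem (y := m)).mp h))
      have h1w : μ₁.μw w' = some m := (μ₁.consistent m w').mp hm1
      have hne1 : μ₁.μm m'' ≠ some w' := by
        intro h
        have := (μ₁.consistent m'' w').mp h
        rw [h1w] at this
        exact hm''ne (Option.some_inj.mp this).symm
      have hwp : I.wPref w' m'' (μ₁.μw w') := by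
        rw [h1w]; exact ⟨hm''mem, Or.inr hidx⟩
      have hnm : ¬ I.mPref m'' w' (μ₁.μm m'') := fun h => h₁.2 m'' w' ⟨hne1, h, hwp⟩
      obtain ⟨hw'mem, _⟩ := h₂.1 m'' w' h2m''
      cases h1m'' : μ₁.μm m'' with
      | none =>
          rw [h1m''] at hnm
          exact absurd hw'mem (by simpa [SMInstance.mPref] using hnm)
      | some w₂ =>
          rw [h1m''] at hnm
          simp only [SMInstance.mPref, not_and, not_or, not_lt, not_not] at hnm
          obtain ⟨hw₂mem, hle2⟩ := hnm hw'mem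
          have hw₂ne : w₂ ≠ w' := fun h => hne1 (h ▸ h1m'')
          have hidx2 : (I.mpref m'').idxOf w₂ < (I.mpref m'').idxOf w' :=
            lt_of_le_of_ne hle2 (fun h => hw₂ne ((List.idxOf_inj hw₂mem (y := w')).mp h))
          refine ⟨m'', rfl, w₂, h1m'', ?_⟩
          rw [h2m'']
          exact ⟨hw₂mem, Or.inr hidx2⟩

lemma men_side [Finite M] (I : SMInstance M W) (μ₁ μ₂ : Matching M W)
    (h₁ : IsStable I μ₁) (h₂ : IsStable I μ₂)
    (m₀ : M) (h0 : μ₂.μm m₀ = none) : μ₁.μm m₀ = none := by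
  classical
  by_contra h
  obtain ⟨w, hw⟩ := Option.ne_none_iff_exists'.mp h
  set P : M → Prop := fun m => ∃ w', μ₁.μm m = some w' ∧ I.mPref m w' (μ₂.μm m) with hPdef
  have hP0 : P m₀ := by
    refine ⟨w, hw, ?_⟩
    rw [h0]
    exact (h₁.1 m₀ w hw).1
  have main : ∀ x : {m // P m}, ∃ y : {m // P m},
      ∃ w', μ₁.μm x.1 = some w' ∧ μ₂.μw w' = some y.1 := by
    rintro ⟨m, hm⟩
    obtain ⟨w', hw', hpref⟩ := hm
    obtain ⟨m'', h2, w₂, hA, hB⟩ := key_step I μ₁ μ₂ h₁ h₂ m w' hw' hpref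
    exact ⟨⟨m'', w₂, hA, hB⟩, w', hw', h2⟩
  let g : {m // P m} → {m // P m} := fun x => (main x).choose
  have gspec : ∀ x, ∃ w', μ₁.μm x.1 = some w' ∧ μ₂.μw w' = some (g x).1 :=
    fun x => (main x).choose_spec
  have ginj : Function.Injective g := by
    intro x y hxy
    obtain ⟨wx, hx1, hx2⟩ := gspec x
    obtain ⟨wy, hy1, hy2⟩ := gspec y
    rw [hxy] at hx2
    have hwxy : wx = wy := by
      have a := (μ₂.consistent (g y).1 wx).mpr hx2
      have b := (μ₂.consistent (g y).1 wy).mpr hy2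
      rw [a] at b
      exact Option.some_inj.mp b
    subst hwxy
    have a := (μ₁.consistent x.1 wx).mp hx1
    have b := (μ₁.consistent y.1 wx).mp hy1
    rw [a] at b
    exact Subtype.ext (Option.some_inj.mp b)
  obtain ⟨x, hx⟩ := Finite.surjective_of_injective ginj ⟨m₀, hP0⟩
  obtain ⟨w', _, h2⟩ := gspec x
  rw [hx] at h2
  have := (μ₂.consistent m₀ w').mpr h2
  rw [h0] at this
  exact Option.some_ne_none w' this.symm

def dualI (I : SMInstance M W) : SMInstance W M :=
  ⟨I.wpref, I.mpref, I.wnodup, I.mnodup⟩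

def dualM (μ : Matching M W) : Matching W M :=
  ⟨μ.μw, μ.μm, fun w m => (μ.consistent m w).symm⟩

lemma dual_stable (I : SMInstance M W) (μ : Matching M W) (h : IsStable I μ) :
    IsStable (dualI I) (dualM μ) := by
  obtain ⟨hir, hnb⟩ := h
  constructor
  · intro w m hwm
    have := (μ.consistent m w).mpr hwm
    exact (hir m w this).symm
  · rintro w m ⟨hne, hp1, hp2⟩
    refine hnb m w ⟨?_, hp2, hp1⟩
    intro h
    exact hne ((μ.consistent m w).mp h)

end Aux

/-- In a stable matching instance with strict preferences, the set of
agents who are unmatched is the same in every stable matching. -/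
theorem unmatched_agents_same {M W : Type*} [DecidableEq M] [DecidableEq W]
    [Fintype M] [Fintype W] (I : SMInstance M W) (μ₁ μ₂ : Matching M W)
    (h₁ : IsStable I μ₁) (h₂ : IsStable I μ₂) :
    (∀ m, μ₁.μm m = none ↔ μ₂.μm m = none) ∧
    (∀ w, μ₁.μw w = none ↔ μ₂.μw w = none) := by
  constructor
  · intro m
    exact ⟨fun h => men_side I μ₂ μ₁ h₂ h₁ m h, fun h => men_side I μ₁ μ₂ h₁ h₂ m h⟩
  · intro w
    exact ⟨fun h => men_side (dualI I) (dualM μ₂) (dualM μ₁)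
        (dual_stable I μ₂ h₂) (dual_stable I μ₁ h₁) w h,
      fun h => men_side (dualI I) (dualM μ₁) (dualM μ₂)
        (dual_stable I μ₁ h₁) (dual_stable I μ₂ h₂) w h⟩
end

section
/- If μ and μ' are stable matchings for a stable matching instance with strict preferences, then the function μ∨μ' that assigns to each man his more preferred partner among μ(m) and μ'(m) (and to each woman the corresponding partner) is a well-defined matching, and it is stable. -/
open List

set_option linter.unusedSectionVars false

section ConwayAux

variable {M W : Type*} [DecidableEq M] [DecidableEq W]

lemma mPref_asymm (I : SMInstance M W) (m : M) {w w' : W}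
    (h1 : I.mPref m w (some w')) (h2 : I.mPref m w' (some w)) : False := by
  obtain ⟨hw, h1⟩ := h1
  obtain ⟨hw', h2⟩ := h2
  rcases h1 with h | h
  · exact h hw'
  · rcases h2 with h' | h'
    · exact h' hw
    · omega

lemma mPref_irrefl (I : SMInstance M W) (m : M) (w : W) : ¬ I.mPref m w (some w) :=
  fun h => mPref_asymm I m h h

lemma mPref_strict (I : SMInstance M W) (m : M) {w w' : W}
    (hw : w ∈ I.mpref m) (hw' : w' ∈ I.mpref m) (hne : w ≠ w')
    (hle : (I.mpref m).idxOf w ≤ (I.mpref m).idxOf w') :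
    I.mPref m w (some w') :=
  ⟨hw, Or.inr (lt_of_le_of_ne hle (fun e => hne ((List.idxOf_inj hw).mp e)))⟩

lemma wPref_strict (I : SMInstance M W) (w : W) {m m' : M}
    (hm : m ∈ I.wpref w) (hm' : m' ∈ I.wpref w) (hne : m ≠ m')
    (hle : (I.wpref w).idxOf m ≤ (I.wpref w).idxOf m') :
    I.wPref w m (some m') :=
  ⟨hm, Or.inr (lt_of_le_of_ne hle (fun e => hne ((List.idxOf_inj hm).mp e)))⟩

lemma mPref_of_mWeak (I : SMInstance M W) (m : M) {w : W} {o₁ o₂ : Option W}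
    (h1 : I.mPref m w o₁) (h2 : I.mWeak m o₁ o₂) : I.mPref m w o₂ := by
  rcases h2 with rfl | ⟨w', rfl, hp⟩
  · exact h1
  · obtain ⟨hw, h1⟩ := h1
    rcases o₂ with _ | w₂
    · exact hw
    · obtain ⟨hw', hp⟩ := hp
      refine ⟨hw, ?_⟩
      rcases h1 with h | h
      · exact absurd hw' h
      · rcases hp with h' | h'
        · exact Or.inl h'
        · exact Or.inr (h.trans h')

lemma not_wPref_resolve (I : SMInstance M W) {w : W} {m : M} {o : Option M}
    (hm : m ∈ I.wpref w) (hn : ¬ I.wPref w m o) :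
    ∃ m', o = some m' ∧ m' ∈ I.wpref w ∧
      (I.wpref w).idxOf m' ≤ (I.wpref w).idxOf m := by
  rcases o with _ | m'
  · exact absurd hm hn
  · simp only [SMInstance.wPref] at hn
    push_neg at hn
    obtain ⟨h1, h2⟩ := hn hm
    exact ⟨m', rfl, h1, h2⟩

lemma not_mPref_resolve (I : SMInstance M W) {m : M} {w : W} {o : Option W}
    (hw : w ∈ I.mpref m) (hn : ¬ I.mPref m w o) :
    ∃ w', o = some w' ∧ w' ∈ I.mpref m ∧
      (I.mpref m).idxOf w' ≤ (I.mpref m).idxOf w := by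
  rcases o with _ | w'
  · exact absurd hw hn
  · simp only [SMInstance.mPref] at hn
    push_neg at hn
    obtain ⟨h1, h2⟩ := hn hw
    exact ⟨w', rfl, h1, h2⟩

/-- The pointwise men-maximum of two matchings. -/
def cjoinM (I : SMInstance M W) (μ μ' : Matching M W) (m : M) : Option W :=
  match μ.μm m with
  | none => μ'.μm m
  | some w =>
    match μ'.μm m with
    | none => some w
    | some w' =>
        if (I.mpref m).idxOf w ≤ (I.mpref m).idxOf w' then some w else some w'

lemma joinM_cases (I : SMInstance M W) (μ μ' : Matching M W) (m : M) :
    cjoinM I μ μ' m = μ.μm m ∨ cjoinM I μ μ' m = μ'.μm m := by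
  rcases hm : μ.μm m with _ | w <;> rcases hm' : μ'.μm m with _ | w' <;>
    simp only [cjoinM, hm, hm']
  · exact Or.inl trivial
  · exact Or.inr trivial
  · exact Or.inl trivial
  · split_ifs with hc
    · exact Or.inl rfl
    · exact Or.inr rfl

lemma joinM_weak (I : SMInstance M W) (μ μ' : Matching M W)
    (hIR : IndivRational I μ) (hIR' : IndivRational I μ') (m : M) :
    I.mWeak m (cjoinM I μ μ' m) (μ.μm m) := by
  rcases hm : μ.μm m with _ | w <;> rcases hm' : μ'.μm m with _ | w' <;>
    simp only [cjoinM, hm, hm']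
  · exact Or.inl rfl
  · exact Or.inr ⟨w', rfl, (hIR' m w' hm').1⟩
  · exact Or.inl rfl
  · split_ifs with hc
    · exact Or.inl rfl
    · exact Or.inr ⟨w', rfl, (hIR' m w' hm').1, Or.inr (not_le.mp hc)⟩

lemma joinM_weak' (I : SMInstance M W) (μ μ' : Matching M W)
    (hIR : IndivRational I μ) (hIR' : IndivRational I μ') (m : M) :
    I.mWeak m (cjoinM I μ μ' m) (μ'.μm m) := by
  rcases hm : μ.μm m with _ | w <;> rcases hm' : μ'.μm m with _ | w' <;>
    simp only [cjoinM, hm, hm']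
  · exact Or.inl rfl
  · exact Or.inl rfl
  · exact Or.inr ⟨w, rfl, (hIR m w hm).1⟩
  · split_ifs with hc
    · by_cases he : w = w'
      · exact Or.inl (by rw [he])
      · exact Or.inr ⟨w, rfl, mPref_strict I m (hIR m w hm).1 (hIR' m w' hm').1 he hc⟩
    · exact Or.inl rfl

lemma join_reject_left (I : SMInstance M W) (μ μ' : Matching M W)
    (hIR : IndivRational I μ) (hIR' : IndivRational I μ') {m : M} {w : W}
    (hw : μ.μm m = some w) (hne : cjoinM I μ μ' m ≠ some w) :
    ∃ w', μ'.μm m = some w' ∧ I.mPref m w' (some w) := by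
  rcases hm' : μ'.μm m with _ | w'
  · exact absurd (by simp [cjoinM, hw, hm']) hne
  · refine ⟨w', rfl, ?_⟩
    simp only [cjoinM, hw, hm'] at hne
    split_ifs at hne with hc
    · exact absurd rfl hne
    · exact ⟨(hIR' m w' hm').1, Or.inr (not_le.mp hc)⟩

lemma join_reject_right (I : SMInstance M W) (μ μ' : Matching M W)
    (hIR : IndivRational I μ) (hIR' : IndivRational I μ') {m : M} {w : W}
    (hw : μ'.μm m = some w) (hne : cjoinM I μ μ' m ≠ some w) :
    ∃ w', μ.μm m = some w' ∧ I.mPref m w' (some w) := by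
  rcases hm : μ.μm m with _ | w₂
  · exact absurd (by simp [cjoinM, hm, hw]) hne
  · refine ⟨w₂, rfl, ?_⟩
    simp only [cjoinM, hm, hw] at hne
    split_ifs at hne with hc
    · have hne2 : w₂ ≠ w := fun e => hne (by rw [e])
      exact mPref_strict I m (hIR m w₂ hm).1 (hIR' m w hw).1 hne2 hc
    · exact absurd rfl hne

/-- If `m₁` keeps his `μ`-partner `w` in the join while his `μ'`-assignment is not `w`,
then `w`'s `μ'`-partner `m₂` is weakly better for `w` than `m₁`. -/
lemma join_cross_le (I : SMInstance M W) {μ μ' : Matching M W}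
    (h : IsStable I μ) (h' : IsStable I μ') {m₁ m₂ : M} {w : W}
    (hj : cjoinM I μ μ' m₁ = some w) (hμ1 : μ.μm m₁ = some w)
    (hne1 : μ'.μm m₁ ≠ some w) (hμ'2 : μ'.μw w = some m₂) :
    m₁ ∈ I.wpref w ∧ m₂ ∈ I.wpref w ∧
      (I.wpref w).idxOf m₂ ≤ (I.wpref w).idxOf m₁ := by
  have hm₁mem : m₁ ∈ I.wpref w := (h.1 m₁ w hμ1).2
  have hweak : I.mWeak m₁ (some w) (μ'.μm m₁) := by
    rw [← hj]; exact joinM_weak' I μ μ' h.1 h'.1 m₁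
  have hpref : I.mPref m₁ w (μ'.μm m₁) := by
    rcases hweak with he | ⟨w₁, hw₁, hp⟩
    · exact absurd he.symm hne1
    · obtain rfl : w₁ = w := by injection hw₁.symm
      exact hp
  have hnw : ¬ I.wPref w m₁ (μ'.μw w) := fun hc => h'.2 m₁ w ⟨hne1, hpref, hc⟩
  obtain ⟨m₃, hm₃, hmem₃, hle⟩ := not_wPref_resolve I hm₁mem hnw
  rw [hμ'2] at hm₃
  obtain rfl : m₃ = m₂ := by injection hm₃.symm
  exact ⟨hm₁mem, hmem₃, hle⟩

/-- Symmetric version of `join_cross_le`, with the roles of `μ` and `μ'` swapped. -/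
lemma join_cross_le' (I : SMInstance M W) {μ μ' : Matching M W}
    (h : IsStable I μ) (h' : IsStable I μ') {m₁ m₂ : M} {w : W}
    (hj : cjoinM I μ μ' m₁ = some w) (hμ'1 : μ'.μm m₁ = some w)
    (hne1 : μ.μm m₁ ≠ some w) (hμ2 : μ.μw w = some m₂) :
    m₁ ∈ I.wpref w ∧ m₂ ∈ I.wpref w ∧
      (I.wpref w).idxOf m₂ ≤ (I.wpref w).idxOf m₁ := by
  have hm₁mem : m₁ ∈ I.wpref w := (h'.1 m₁ w hμ'1).2
  have hweak : I.mWeak m₁ (some w) (μ.μm m₁) := by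
    rw [← hj]; exact joinM_weak I μ μ' h.1 h'.1 m₁
  have hpref : I.mPref m₁ w (μ.μm m₁) := by
    rcases hweak with he | ⟨w₁, hw₁, hp⟩
    · exact absurd he.symm hne1
    · obtain rfl : w₁ = w := by injection hw₁.symm
      exact hp
  have hnw : ¬ I.wPref w m₁ (μ.μw w) := fun hc => h.2 m₁ w ⟨hne1, hpref, hc⟩
  obtain ⟨m₃, hm₃, hmem₃, hle⟩ := not_wPref_resolve I hm₁mem hnw
  rw [hμ2] at hm₃
  obtain rfl : m₃ = m₂ := by injection hm₃.symm
  exact ⟨hm₁mem, hmem₃, hle⟩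

lemma join_inj (I : SMInstance M W) {μ μ' : Matching M W}
    (h : IsStable I μ) (h' : IsStable I μ') {m m' : M} {w : W}
    (hm : cjoinM I μ μ' m = some w) (hm' : cjoinM I μ μ' m' = some w) : m = m' := by
  by_contra hne
  have src : ∀ m₀, cjoinM I μ μ' m₀ = some w →
      μ.μm m₀ = some w ∨ μ'.μm m₀ = some w := by
    intro m₀ h₀
    rcases joinM_cases I μ μ' m₀ with hc | hc
    · exact Or.inl (by rw [← hc]; exact h₀)
    · exact Or.inr (by rw [← hc]; exact h₀)
  have sameμ : ∀ m₁ m₂ : M, μ.μm m₁ = some w → μ.μm m₂ = some w → m₁ = m₂ := by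
    intro m₁ m₂ h1 h2
    have c1 := (μ.consistent m₁ w).mp h1
    have c2 := (μ.consistent m₂ w).mp h2
    rw [c2] at c1; exact (Option.some_inj.mp c1).symm
  have sameμ' : ∀ m₁ m₂ : M, μ'.μm m₁ = some w → μ'.μm m₂ = some w → m₁ = m₂ := by
    intro m₁ m₂ h1 h2
    have c1 := (μ'.consistent m₁ w).mp h1
    have c2 := (μ'.consistent m₂ w).mp h2
    rw [c2] at c1; exact (Option.some_inj.mp c1).symm
  have cross : ∀ m₁ m₂ : M, m₁ ≠ m₂ → cjoinM I μ μ' m₁ = some w →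
      cjoinM I μ μ' m₂ = some w → μ.μm m₁ = some w → μ'.μm m₂ = some w → False := by
    intro m₁ m₂ h12 hj1 hj2 hμ1 hμ'2
    by_cases he1 : μ'.μm m₁ = some w
    · exact h12 (sameμ' m₁ m₂ he1 hμ'2)
    by_cases he2 : μ.μm m₂ = some w
    · exact h12 (sameμ m₁ m₂ hμ1 he2)
    have hA := join_cross_le I h h' hj1 hμ1 he1 ((μ'.consistent m₂ w).mp hμ'2)
    have hB := join_cross_le' I h h' hj2 hμ'2 he2 ((μ.consistent m₁ w).mp hμ1)
    exact h12 (((List.idxOf_inj hA.2.1).mp (le_antisymm hA.2.2 hB.2.2)).symm)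
  rcases src m hm with h1 | h1 <;> rcases src m' hm' with h2 | h2
  · exact hne (sameμ m m' h1 h2)
  · exact cross m m' hne hm hm' h1 h2
  · exact cross m' m (Ne.symm hne) hm' hm h2 h1
  · exact hne (sameμ' m m' h1 h2)

/-- The chain predicate: the `μ`-partner `p` of `w` strictly prefers his
`μ'`-partner to `w`. -/
def ChainP (I : SMInstance M W) (μ μ' : Matching M W) (w : W) : Prop :=
  ∃ p w', μ.μw w = some p ∧ μ'.μm p = some w' ∧ I.mPref p w' (some w)

lemma chainP_step (I : SMInstance M W) {μ μ' : Matching M W}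
    (h : IsStable I μ) (h' : IsStable I μ') {w : W} (hw : ChainP I μ μ' w) :
    ∃ w₁, (μ.μw w).bind μ'.μm = some w₁ ∧ ChainP I μ μ' w₁ := by
  obtain ⟨p, w', hp, hp', hpref⟩ := hw
  refine ⟨w', by rw [hp]; simpa using hp', ?_⟩
  have hmp : μ.μm p = some w := (μ.consistent p w).mpr hp
  have hwmem : w ∈ I.mpref p := (h.1 p w hmp).1
  have hpw' : p ∈ I.wpref w' := (h'.1 p w' hp').2
  have hne : w' ≠ w := by
    rintro rfl
    exact mPref_irrefl I p w' hpref
  have hμmne : μ.μm p ≠ some w' := by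
    rw [hmp]; intro e
    exact hne (Option.some_inj.mp e).symm
  have h1 : ¬ I.wPref w' p (μ.μw w') := fun hc =>
    h.2 p w' ⟨hμmne, by rw [hmp]; exact hpref, hc⟩
  obtain ⟨p₁, hp₁eq, hp₁mem, hp₁le⟩ := not_wPref_resolve I hpw' h1
  have hμmp₁ : μ.μm p₁ = some w' := (μ.consistent p₁ w').mpr hp₁eq
  have hnep₁ : p₁ ≠ p := by
    rintro rfl
    rw [hmp] at hμmp₁
    exact hne (Option.some_inj.mp hμmp₁).symm
  have hμ'w' : μ'.μw w' = some p := (μ'.consistent p w').mp hp'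
  have hwpref₁ : I.wPref w' p₁ (some p) := wPref_strict I w' hp₁mem hpw' hnep₁ hp₁le
  have hne2 : μ'.μm p₁ ≠ some w' := by
    intro e
    have := (μ'.consistent p₁ w').mp e
    rw [hμ'w'] at this
    exact hnep₁ (Option.some_inj.mp this).symm
  have h2 : ¬ I.mPref p₁ w' (μ'.μm p₁) := fun hc =>
    h'.2 p₁ w' ⟨hne2, hc, by rw [hμ'w']; exact hwpref₁⟩
  have hw'memp₁ : w' ∈ I.mpref p₁ := (h.1 p₁ w' hμmp₁).1
  obtain ⟨w₂, hw₂eq, hw₂mem, hw₂le⟩ := not_mPref_resolve I hw'memp₁ h2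
  have hne₃ : w₂ ≠ w' := by
    rintro rfl
    exact hne2 hw₂eq
  exact ⟨p₁, w₂, hp₁eq, hw₂eq, mPref_strict I p₁ hw₂mem hw'memp₁ hne₃ hw₂le⟩

lemma chain_back {μ μ' : Matching M W} {x z : W}
    (h : (μ.μw x).bind μ'.μm = some z) : (μ'.μw z).bind μ.μm = some x := by
  rcases hx : μ.μw x with _ | p
  · rw [hx] at h; simp at h
  · rw [hx] at h
    simp only [Option.bind_some] at h
    have h1 : μ'.μw z = some p := (μ'.consistent p z).mp h
    have h2 : μ.μm p = some x := (μ.consistent p x).mpr hx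
    rw [h1]; simpa using h2

lemma conway_no_reject [Fintype W] (I : SMInstance M W) {μ μ' : Matching M W}
    (h : IsStable I μ) (h' : IsStable I μ') {w : W} {q : M}
    (hP : ChainP I μ μ' w) (hq : μ'.μw w = some q)
    {w₂ : W} (hq2 : μ.μm q = some w₂) (hqpref : I.mPref q w₂ (some w)) : False := by
  classical
  have hstep : ∀ x, ChainP I μ μ' x →
      ∃ w₁, (μ.μw x).bind μ'.μm = some w₁ ∧ ChainP I μ μ' w₁ :=
    fun x hx => chainP_step I h h' hx
  let T : W → W := fun x => if hx : ChainP I μ μ' x then (hstep x hx).choose else x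
  have hT : ∀ x (hx : ChainP I μ μ' x),
      (μ.μw x).bind μ'.μm = some (T x) ∧ ChainP I μ μ' (T x) := by
    intro x hx
    simp only [T, dif_pos hx]
    exact (hstep x hx).choose_spec
  let c : ℕ → W := fun n => T^[n] w
  have hcs : ∀ n, c (n + 1) = T (c n) := fun n => Function.iterate_succ_apply' T n w
  have hPc : ∀ n, ChainP I μ μ' (c n) := by
    intro n
    induction n with
    | zero => exact hP
    | succ n ih => rw [hcs n]; exact (hT _ ih).2
  have hΦ : ∀ n, (μ.μw (c n)).bind μ'.μm = some (c (n + 1)) := by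
    intro n
    rw [hcs n]
    exact (hT _ (hPc n)).1
  have hdec : ∀ a b, c (a + 1) = c (b + 1) → c a = c b := by
    intro a b hab
    have h1 := chain_back (μ := μ) (μ' := μ') (hΦ a)
    have h2 := chain_back (μ := μ) (μ' := μ') (hΦ b)
    rw [hab] at h1
    rw [h1] at h2
    exact Option.some_inj.mp h2
  obtain ⟨i, j, hij, hcij⟩ := Finite.exists_ne_map_eq_of_infinite c
  have key : ∃ d, 0 < d ∧ c d = c 0 := by
    rcases hij.lt_or_gt with hlt | hlt
    · refine ⟨j - i, by omega, ?_⟩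
      have : ∀ k, k ≤ i → c (i - k) = c (j - k) := by
        intro k hk
        induction k with
        | zero => simpa using hcij
        | succ k ih =>
          have h1 : c (i - k) = c (j - k) := ih (by omega)
          have e1 : i - k = (i - (k + 1)) + 1 := by omega
          have e2 : j - k = (j - (k + 1)) + 1 := by omega
          rw [e1, e2] at h1
          exact hdec _ _ h1
      have := this i le_rfl
      simp only [Nat.sub_self] at this
      exact this.symm
    · refine ⟨i - j, by omega, ?_⟩
      have : ∀ k, k ≤ j → c (j - k) = c (i - k) := by
        intro k hk
        induction k with
        | zero => simpa using hcij.symm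
        | succ k ih =>
          have h1 : c (j - k) = c (i - k) := ih (by omega)
          have e1 : j - k = (j - (k + 1)) + 1 := by omega
          have e2 : i - k = (i - (k + 1)) + 1 := by omega
          rw [e1, e2] at h1
          exact hdec _ _ h1
      have := this j le_rfl
      simp only [Nat.sub_self] at this
      exact this.symm
  obtain ⟨d, hd0, hcd⟩ := key
  have hc0 : c 0 = w := rfl
  have hΦd := hΦ (d - 1)
  rw [show d - 1 + 1 = d by omega, hcd, hc0] at hΦd
  rcases he : μ.μw (c (d - 1)) with _ | p
  · rw [he] at hΦd; simp at hΦd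
  · rw [he] at hΦd
    simp only [Option.bind_some] at hΦd
    -- hΦd : μ'.μm p = some w
    have hpq : p = q := by
      have := (μ'.consistent p w).mp hΦd
      rw [hq] at this
      exact (Option.some_inj.mp this).symm
    rw [hpq] at hΦd he
    obtain ⟨p', w', hp', hw', hpref'⟩ := hPc (d - 1)
    rw [he] at hp'
    have hp'q : p' = q := (Option.some_inj.mp hp').symm
    rw [hp'q] at hw' hpref'
    rw [hΦd] at hw'
    have hww : w' = w := (Option.some_inj.mp hw').symm
    rw [hww] at hpref'
    have hμmp : μ.μm q = some (c (d - 1)) := (μ.consistent q (c (d - 1))).mpr he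
    rw [hq2] at hμmp
    have hw₂c : w₂ = c (d - 1) := Option.some_inj.mp hμmp
    rw [hw₂c] at hqpref
    exact mPref_asymm I q hpref' hqpref

end ConwayAux

/-- Conway's Lattice Theorem, join part: the pointwise men-maximum
of two stable matchings is a well-defined matching and is stable. -/
theorem conway_join {M W : Type*} [DecidableEq M] [DecidableEq W]
    [Fintype M] [Fintype W] (I : SMInstance M W) (μ μ' : Matching M W)
    (h : IsStable I μ) (h' : IsStable I μ') :
    ∃ ν : Matching M W, IsStable I ν ∧
      ∀ m, (ν.μm m = μ.μm m ∨ ν.μm m = μ'.μm m) ∧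
        I.mWeak m (ν.μm m) (μ.μm m) ∧ I.mWeak m (ν.μm m) (μ'.μm m) := by
  classical
  obtain ⟨g, hg⟩ : ∃ g : W → Option M,
      ∀ m w, cjoinM I μ μ' m = some w ↔ g w = some m := by
    refine ⟨fun w => if hw : ∃ m, cjoinM I μ μ' m = some w then some hw.choose
      else none, ?_⟩
    intro m w
    constructor
    · intro hm
      have hex : ∃ m₀, cjoinM I μ μ' m₀ = some w := ⟨m, hm⟩
      show (if hw : ∃ m₀, cjoinM I μ μ' m₀ = some w then some hw.choose else none)
        = some m
      rw [dif_pos hex]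
      exact congrArg some (join_inj I h h' hex.choose_spec hm)
    · intro hm
      have hm2 : (if hw : ∃ m₀, cjoinM I μ μ' m₀ = some w then some hw.choose
        else none) = some m := hm
      split_ifs at hm2 with hex
      · rw [← Option.some_inj.mp hm2]
        exact hex.choose_spec
  refine ⟨⟨cjoinM I μ μ', g, hg⟩, ⟨?_, ?_⟩, ?_⟩
  · -- individual rationality
    intro m w hmw
    rcases joinM_cases I μ μ' m with hc | hc
    · exact h.1 m w (by rw [← hc]; exact hmw)
    · exact h'.1 m w (by rw [← hc]; exact hmw)
  · -- no blocking pair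
    intro m w hb
    obtain ⟨hb1, hb2, hb3⟩ := hb
    have hb2' : I.mPref m w (cjoinM I μ μ' m) := hb2
    have hb3' : I.wPref w m (g w) := hb3
    have hwμ : I.mPref m w (μ.μm m) :=
      mPref_of_mWeak I m hb2' (joinM_weak I μ μ' h.1 h'.1 m)
    have hwμ' : I.mPref m w (μ'.μm m) :=
      mPref_of_mWeak I m hb2' (joinM_weak' I μ μ' h.1 h'.1 m)
    have hne : μ.μm m ≠ some w := fun e => mPref_irrefl I m w (e ▸ hwμ)
    have hne' : μ'.μm m ≠ some w := fun e => mPref_irrefl I m w (e ▸ hwμ')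
    have hnw : ¬ I.wPref w m (μ.μw w) := fun hc => h.2 m w ⟨hne, hwμ, hc⟩
    have hnw' : ¬ I.wPref w m (μ'.μw w) := fun hc => h'.2 m w ⟨hne', hwμ', hc⟩
    have hmmem : m ∈ I.wpref w := by
      rcases hgw : g w with _ | m'' <;> rw [hgw] at hb3'
      · exact hb3'
      · exact hb3'.1
    rcases hgw : g w with _ | m''
    · -- w unmatched in the join: chain argument
      obtain ⟨p, hpeq, -, -⟩ := not_wPref_resolve I hmmem hnw
      obtain ⟨q, hqeq, -, -⟩ := not_wPref_resolve I hmmem hnw'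
      have hnone : ∀ m₀, cjoinM I μ μ' m₀ ≠ some w := by
        intro m₀ e
        have he := (hg m₀ w).mp e
        rw [hgw] at he
        cases he
      have hμmp : μ.μm p = some w := (μ.consistent p w).mpr hpeq
      have hμ'mq : μ'.μm q = some w := (μ'.consistent q w).mpr hqeq
      obtain ⟨w', hw', hppref⟩ := join_reject_left I μ μ' h.1 h'.1 hμmp (hnone p)
      obtain ⟨w₂, hw₂, hqpref⟩ := join_reject_right I μ μ' h.1 h'.1 hμ'mq (hnone q)
      exact conway_no_reject I h h' ⟨p, w', hpeq, hw', hppref⟩ hqeq hw₂ hqpref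
    · rw [hgw] at hb3'
      have hfm'' : cjoinM I μ μ' m'' = some w := (hg m'' w).mpr hgw
      rcases joinM_cases I μ μ' m'' with hc | hc
      · have hc2 : μ.μw w = some m'' := (μ.consistent m'' w).mp (by rw [← hc]; exact hfm'')
        exact hnw (by rw [hc2]; exact hb3')
      · have hc2 : μ'.μw w = some m'' := (μ'.consistent m'' w).mp (by rw [← hc]; exact hfm'')
        exact hnw' (by rw [hc2]; exact hb3')
  · intro m
    exact ⟨joinM_cases I μ μ' m, joinM_weak I μ μ' h.1 h'.1 m,
      joinM_weak' I μ μ' h.1 h'.1 m⟩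
end

section
/- If μ and μ' are stable matchings for a stable matching instance with strict preferences, then the function μ∧μ' that assigns to each man his less preferred partner among μ(m) and μ'(m) is a well-defined matching, and it is stable. -/
open List

set_option linter.unusedSectionVars false

namespace ConwayAux

variable {M W : Type*} [DecidableEq M] [DecidableEq W]

lemma mPref_irrefl (I : SMInstance M W) (m : M) (w : W) : ¬ I.mPref m w (some w) := by
  rintro ⟨h1, h2 | h2⟩
  · exact h2 h1
  · exact lt_irrefl _ h2

lemma wPref_irrefl (I : SMInstance M W) (w : W) (m : M) : ¬ I.wPref w m (some m) := by
  rintro ⟨h1, h2 | h2⟩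
  · exact h2 h1
  · exact lt_irrefl _ h2

lemma mPref_asymm (I : SMInstance M W) {m : M} {w w' : W} (h : I.mPref m w (some w')) :
    ¬ I.mPref m w' (some w) := by
  rintro ⟨h1, h2 | h2⟩
  · exact h2 h.1
  · rcases h with ⟨h3, h4 | h4⟩
    · exact h4 h1
    · omega

lemma wPref_asymm (I : SMInstance M W) {w : W} {m m' : M} (h : I.wPref w m (some m')) :
    ¬ I.wPref w m' (some m) := by
  rintro ⟨h1, h2 | h2⟩
  · exact h2 h.1
  · rcases h with ⟨h3, h4 | h4⟩
    · exact h4 h1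
    · omega

lemma mPref_total (I : SMInstance M W) {m : M} {w w' : W} (hw : w ∈ I.mpref m)
    (hw' : w' ∈ I.mpref m) (hne : w ≠ w') :
    I.mPref m w (some w') ∨ I.mPref m w' (some w) := by
  have hidx : (I.mpref m).idxOf w ≠ (I.mpref m).idxOf w' :=
    fun hh => hne ((List.idxOf_inj hw).1 hh)
  rcases Nat.lt_or_ge ((I.mpref m).idxOf w) ((I.mpref m).idxOf w') with hlt | hge
  · exact Or.inl ⟨hw, Or.inr hlt⟩
  · exact Or.inr ⟨hw', Or.inr (by omega)⟩

lemma wPref_total (I : SMInstance M W) {w : W} {m m' : M} (hm : m ∈ I.wpref w)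
    (hm' : m' ∈ I.wpref w) (hne : m ≠ m') :
    I.wPref w m (some m') ∨ I.wPref w m' (some m) := by
  have hidx : (I.wpref w).idxOf m ≠ (I.wpref w).idxOf m' :=
    fun hh => hne ((List.idxOf_inj hm).1 hh)
  rcases Nat.lt_or_ge ((I.wpref w).idxOf m) ((I.wpref w).idxOf m') with hlt | hge
  · exact Or.inl ⟨hm, Or.inr hlt⟩
  · exact Or.inr ⟨hm', Or.inr (by omega)⟩

lemma wPref_wWeak_trans (I : SMInstance M W) {w : W} {m : M} {o₁ o₂ : Option M}
    (h1 : I.wPref w m o₁) (h2 : I.wWeak w o₁ o₂) : I.wPref w m o₂ := by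
  rcases h2 with rfl | ⟨m₁, rfl, h3⟩
  · exact h1
  · rcases o₂ with _ | m₂
    · exact h1.1
    · refine ⟨h1.1, ?_⟩
      have hlt : (I.wpref w).idxOf m < (I.wpref w).idxOf m₁ := by
        rcases h1 with ⟨_, h5 | h5⟩
        · exact absurd h3.1 h5
        · exact h5
      rcases h3 with ⟨hm₁, h4 | h4⟩
      · exact Or.inl h4
      · exact Or.inr (hlt.trans h4)

/-- Opposite-preferences lemma (man side): if `m` strictly prefers his `μ`-partner `w`
to his `μ'`-assignment, then `w` strictly prefers her `μ'`-partner to `m`. -/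
lemma opposite {I : SMInstance M W} {μ μ' : Matching M W}
    (h : IsStable I μ) (h' : IsStable I μ') {m : M} {w : W}
    (hm : μ.μm m = some w) (hp : I.mPref m w (μ'.μm m)) :
    ∃ m₂, μ'.μw w = some m₂ ∧ I.wPref w m₂ (some m) := by
  have hne : μ'.μm m ≠ some w := by
    intro he; rw [he] at hp; exact mPref_irrefl I m w hp
  have hmw : m ∈ I.wpref w := (h.1 m w hm).2
  have hnwp : ¬ I.wPref w m (μ'.μw w) := fun hq => h'.2 m w ⟨hne, hp, hq⟩
  rcases hww : μ'.μw w with _ | m₂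
  · rw [hww] at hnwp; exact absurd hmw hnwp
  · rw [hww] at hnwp
    have hm₂ : m₂ ∈ I.wpref w := by
      by_contra hc
      exact hnwp ⟨hmw, Or.inl hc⟩
    have hne2 : m₂ ≠ m := by
      intro he
      rw [he] at hww
      exact hne ((μ'.consistent m w).2 hww)
    have hidx : ¬ (I.wpref w).idxOf m < (I.wpref w).idxOf m₂ :=
      fun hlt => hnwp ⟨hmw, Or.inr hlt⟩
    have hidx2 : (I.wpref w).idxOf m₂ ≠ (I.wpref w).idxOf m :=
      fun he => hne2 ((List.idxOf_inj hm₂).1 he)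
    exact ⟨m₂, rfl, hm₂, Or.inr (by omega)⟩

/-- Opposite-preferences lemma (woman side). -/
lemma opposite' {I : SMInstance M W} {μ μ' : Matching M W}
    (h : IsStable I μ) (h' : IsStable I μ') {w : W} {m : M}
    (hm : μ.μw w = some m) (hp : I.wPref w m (μ'.μw w)) :
    ∃ w₂, μ'.μm m = some w₂ ∧ I.mPref m w₂ (some w) := by
  have hne : μ'.μw w ≠ some m := by
    intro he; rw [he] at hp; exact wPref_irrefl I w m hp
  have hne' : μ'.μm m ≠ some w := fun he => hne ((μ'.consistent m w).1 he)
  have hmm : w ∈ I.mpref m := (h.1 m w ((μ.consistent m w).2 hm)).1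
  have hnmp : ¬ I.mPref m w (μ'.μm m) := fun hq => h'.2 m w ⟨hne', hq, hp⟩
  rcases hmw : μ'.μm m with _ | w₂
  · rw [hmw] at hnmp; exact absurd hmm hnmp
  · rw [hmw] at hnmp
    have hw₂ : w₂ ∈ I.mpref m := by
      by_contra hc
      exact hnmp ⟨hmm, Or.inl hc⟩
    have hne2 : w₂ ≠ w := by
      intro he
      rw [he] at hmw
      exact hne' hmw
    have hidx : ¬ (I.mpref m).idxOf w < (I.mpref m).idxOf w₂ :=
      fun hlt => hnmp ⟨hmm, Or.inr hlt⟩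
    have hidx2 : (I.mpref m).idxOf w₂ ≠ (I.mpref m).idxOf w :=
      fun he => hne2 ((List.idxOf_inj hw₂).1 he)
    exact ⟨w₂, rfl, hw₂, Or.inr (by omega)⟩

/-- The chain/cycle lemma: if `m` strictly prefers his `μ`-partner `w` to his
`μ'`-assignment, then `m` is `μ'`-matched, to a woman `w'` whose `μ`-partner `p`
also strictly prefers `w'` to his `μ'`-assignment. -/
lemma chain_key [Finite M] [Finite W] {I : SMInstance M W} {μ μ' : Matching M W}
    (h : IsStable I μ) (h' : IsStable I μ') {m : M} {w : W}
    (hm : μ.μm m = some w) (hp : I.mPref m w (μ'.μm m)) :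
    ∃ p w', μ'.μm m = some w' ∧ μ.μm p = some w' ∧ I.mPref p w' (μ'.μm p) := by
  classical
  have step : ∀ p : {p : M × W // μ.μm p.1 = some p.2 ∧ I.mPref p.1 p.2 (μ'.μm p.1)},
      ∃ q : {p : M × W // μ.μm p.1 = some p.2 ∧ I.mPref p.1 p.2 (μ'.μm p.1)},
        μ'.μm q.val.1 = some p.val.2 := by
    rintro ⟨⟨a, b⟩, hab, hpref⟩
    obtain ⟨m₂, hm₂, hwp⟩ := opposite h h' hab hpref
    have hμw : μ.μw b = some a := (μ.consistent a b).1 hab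
    obtain ⟨w₂, hw₂, hmp⟩ := opposite' h' h hm₂ (by rw [hμw]; exact hwp)
    have hμ'm₂ : μ'.μm m₂ = some b := (μ'.consistent m₂ b).2 hm₂
    exact ⟨⟨(m₂, w₂), hw₂, by rw [hμ'm₂]; exact hmp⟩, hμ'm₂⟩
  choose f hf using step
  have hinj : Function.Injective f := by
    intro p q hpq
    have h1 := hf p
    have h2 := hf q
    rw [hpq] at h1
    rw [h2] at h1
    have hww : q.val.2 = p.val.2 := by injection h1
    have hmm : q.val.1 = p.val.1 := by
      have e1 : μ.μw p.val.2 = some p.val.1 := (μ.consistent _ _).1 p.prop.1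
      have e2 : μ.μw q.val.2 = some q.val.1 := (μ.consistent _ _).1 q.prop.1
      rw [hww] at e2
      rw [e1] at e2
      injection e2 with hh
      exact hh.symm
    exact Subtype.ext (Prod.ext hmm.symm hww.symm)
  have hsurj : Function.Surjective f := Finite.surjective_of_injective hinj
  obtain ⟨q, hq⟩ := hsurj ⟨(m, w), hm, hp⟩
  have hspec := hf q
  rw [hq] at hspec
  exact ⟨q.val.1, q.val.2, hspec, q.prop.1, q.prop.2⟩

/-- Woman-side chain lemma, conclusion reduced to what we need. -/
lemma chain_key' [Finite M] [Finite W] {I : SMInstance M W} {μ μ' : Matching M W}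
    (h : IsStable I μ) (h' : IsStable I μ') {w : W} {m : M}
    (hm : μ.μw w = some m) (hp : I.wPref w m (μ'.μw w)) :
    ∃ m', μ'.μw w = some m' := by
  classical
  have step : ∀ p : {p : W × M // μ.μw p.1 = some p.2 ∧ I.wPref p.1 p.2 (μ'.μw p.1)},
      ∃ q : {p : W × M // μ.μw p.1 = some p.2 ∧ I.wPref p.1 p.2 (μ'.μw p.1)},
        μ'.μw q.val.1 = some p.val.2 := by
    rintro ⟨⟨b, a⟩, hab, hpref⟩
    obtain ⟨w₂, hw₂, hmp⟩ := opposite' h h' hab hpref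
    have hμm : μ.μm a = some b := (μ.consistent a b).2 hab
    obtain ⟨m₂, hm₂, hwp⟩ := opposite h' h hw₂ (by rw [hμm]; exact hmp)
    have hμ'w₂ : μ'.μw w₂ = some a := (μ'.consistent a w₂).1 hw₂
    exact ⟨⟨(w₂, m₂), hm₂, by rw [hμ'w₂]; exact hwp⟩, hμ'w₂⟩
  choose f hf using step
  have hinj : Function.Injective f := by
    intro p q hpq
    have h1 := hf p
    have h2 := hf q
    rw [hpq] at h1
    rw [h2] at h1
    have hmm : q.val.2 = p.val.2 := by injection h1
    have hww : q.val.1 = p.val.1 := by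
      have e1 : μ.μm p.val.2 = some p.val.1 := (μ.consistent _ _).2 p.prop.1
      have e2 : μ.μm q.val.2 = some q.val.1 := (μ.consistent _ _).2 q.prop.1
      rw [hmm] at e2
      rw [e1] at e2
      injection e2 with hh
      exact hh.symm
    exact Subtype.ext (Prod.ext hww.symm hmm.symm)
  have hsurj : Function.Surjective f := Finite.surjective_of_injective hinj
  obtain ⟨q, hq⟩ := hsurj ⟨(w, m), hm, hp⟩
  have hspec := hf q
  rw [hq] at hspec
  exact ⟨q.val.2, hspec⟩

/-- Lone-wolf / rural hospitals (men): a man matched in one stable matching is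
matched in every stable matching. -/
lemma lone_wolf_m [Finite M] [Finite W] {I : SMInstance M W} {μ μ' : Matching M W}
    (h : IsStable I μ) (h' : IsStable I μ') {m : M} {w : W}
    (hm : μ.μm m = some w) : ∃ w', μ'.μm m = some w' := by
  rcases hc : μ'.μm m with _ | w'
  · exfalso
    have hp : I.mPref m w (μ'.μm m) := by
      rw [hc]; exact (h.1 m w hm).1
    obtain ⟨p, w', hspec, -, -⟩ := chain_key h h' hm hp
    rw [hc] at hspec
    cases hspec
  · exact ⟨w', rfl⟩

/-- Lone-wolf (women). -/
lemma lone_wolf_w [Finite M] [Finite W] {I : SMInstance M W} {μ μ' : Matching M W}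
    (h : IsStable I μ) (h' : IsStable I μ') {w : W} {m : M}
    (hm : μ.μw w = some m) : ∃ m', μ'.μw w = some m' := by
  rcases hc : μ'.μw w with _ | m'
  · exfalso
    have hp : I.wPref w m (μ'.μw w) := by
      rw [hc]; exact (h.1 m w ((μ.consistent m w).2 hm)).2
    obtain ⟨m', hspec⟩ := chain_key' h h' hm hp
    rw [hc] at hspec
    cases hspec
  · exact ⟨m', rfl⟩

/-- Key structural lemma: if `m` strictly prefers his `μ'`-partner `w₂` to his
`μ`-partner `w`, then `w` strictly prefers `m` to her `μ'`-assignment. -/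
lemma cycleB [Finite M] [Finite W] {I : SMInstance M W} {μ μ' : Matching M W}
    (h : IsStable I μ) (h' : IsStable I μ') {m : M} {w w₂ : W}
    (hm : μ.μm m = some w) (hm' : μ'.μm m = some w₂)
    (hp : I.mPref m w₂ (some w)) : I.wPref w m (μ'.μw w) := by
  have hp' : I.mPref m w₂ (μ.μm m) := by rw [hm]; exact hp
  obtain ⟨p, w', hspec, hpμ', hppref⟩ := chain_key h' h hm' hp'
  -- hspec : μ.μm m = some w', hpμ' : μ'.μm p = some w', hppref : mPref p w' (μ.μm p)
  rw [hm] at hspec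
  have hwe : w' = w := by injection hspec with hh; exact hh.symm
  subst hwe
  have hw₂ne : w₂ ≠ w' := fun he => mPref_irrefl I m w' (he ▸ hp)
  have hpm : p ≠ m := by
    intro he
    rw [he, hm'] at hpμ'
    exact hw₂ne (by injection hpμ')
  have hneq : μ.μm p ≠ some w' := by
    intro he; rw [he] at hppref; exact mPref_irrefl I p w' hppref
  have hnwp : ¬ I.wPref w' p (μ.μw w') := fun hq => h.2 p w' ⟨hneq, hppref, hq⟩
  have hμw : μ.μw w' = some m := (μ.consistent m w').1 hm
  rw [hμw] at hnwp
  have hpmem : p ∈ I.wpref w' := (h'.1 p w' hpμ').2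
  have hmmem : m ∈ I.wpref w' := (h.1 m w' hm).2
  have h1 : ¬ (I.wpref w').idxOf p < (I.wpref w').idxOf m := by
    intro hlt; exact hnwp ⟨hpmem, Or.inr hlt⟩
  have h2 : (I.wpref w').idxOf m ≠ (I.wpref w').idxOf p :=
    fun he => hpm (((List.idxOf_inj hpmem).1 he.symm))
  have hres : I.wPref w' m (some p) := ⟨hmmem, Or.inr (by omega)⟩
  rw [(μ'.consistent p w').1 hpμ']
  exact hres

open Classical in
/-- The man-pessimal choice. -/
noncomputable def pickWorse (I : SMInstance M W) (m : M) (o₁ o₂ : Option W) : Option W :=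
  if I.mWeak m o₁ o₂ then o₂ else o₁

open Classical in
/-- The woman-optimal choice. -/
noncomputable def pickBetter (I : SMInstance M W) (w : W) (o₁ o₂ : Option M) : Option M :=
  if I.wWeak w o₁ o₂ then o₁ else o₂

lemma pickWorse_pos (I : SMInstance M W) (m : M) {o₁ o₂ : Option W}
    (hq : I.mWeak m o₁ o₂) : pickWorse I m o₁ o₂ = o₂ := by
  simp only [pickWorse]; exact if_pos hq

lemma pickWorse_neg (I : SMInstance M W) (m : M) {o₁ o₂ : Option W}
    (hq : ¬ I.mWeak m o₁ o₂) : pickWorse I m o₁ o₂ = o₁ := by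
  simp only [pickWorse]; exact if_neg hq

lemma pickBetter_pos (I : SMInstance M W) (w : W) {o₁ o₂ : Option M}
    (hq : I.wWeak w o₁ o₂) : pickBetter I w o₁ o₂ = o₁ := by
  simp only [pickBetter]; exact if_pos hq

lemma pickBetter_neg (I : SMInstance M W) (w : W) {o₁ o₂ : Option M}
    (hq : ¬ I.wWeak w o₁ o₂) : pickBetter I w o₁ o₂ = o₂ := by
  simp only [pickBetter]; exact if_neg hq

lemma pickWorse_or (I : SMInstance M W) (m : M) (o₁ o₂ : Option W) :
    pickWorse I m o₁ o₂ = o₁ ∨ pickWorse I m o₁ o₂ = o₂ := by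
  simp only [pickWorse]
  split
  · exact Or.inr rfl
  · exact Or.inl rfl

lemma pickBetter_or (I : SMInstance M W) (w : W) (o₁ o₂ : Option M) :
    pickBetter I w o₁ o₂ = o₁ ∨ pickBetter I w o₁ o₂ = o₂ := by
  simp only [pickBetter]
  split
  · exact Or.inl rfl
  · exact Or.inr rfl

end ConwayAux

namespace ConwayAux

variable {M W : Type*} [DecidableEq M] [DecidableEq W]

lemma mWeak_total (I : SMInstance M W) {m : M} {o₁ o₂ : Option W}
    (h₁ : ∀ w, o₁ = some w → w ∈ I.mpref m) (h₂ : ∀ w, o₂ = some w → w ∈ I.mpref m) :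
    I.mWeak m o₁ o₂ ∨ I.mWeak m o₂ o₁ := by
  rcases o₁ with _ | w₁
  · rcases o₂ with _ | w₂
    · exact Or.inl (Or.inl rfl)
    · exact Or.inr (Or.inr ⟨w₂, rfl, h₂ w₂ rfl⟩)
  · rcases o₂ with _ | w₂
    · exact Or.inl (Or.inr ⟨w₁, rfl, h₁ w₁ rfl⟩)
    · by_cases he : w₁ = w₂
      · exact Or.inl (Or.inl (by rw [he]))
      · rcases mPref_total I (h₁ w₁ rfl) (h₂ w₂ rfl) he with hp | hp
        · exact Or.inl (Or.inr ⟨w₁, rfl, hp⟩)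
        · exact Or.inr (Or.inr ⟨w₂, rfl, hp⟩)

lemma wWeak_total (I : SMInstance M W) {w : W} {o₁ o₂ : Option M}
    (h₁ : ∀ m, o₁ = some m → m ∈ I.wpref w) (h₂ : ∀ m, o₂ = some m → m ∈ I.wpref w) :
    I.wWeak w o₁ o₂ ∨ I.wWeak w o₂ o₁ := by
  rcases o₁ with _ | m₁
  · rcases o₂ with _ | m₂
    · exact Or.inl (Or.inl rfl)
    · exact Or.inr (Or.inr ⟨m₂, rfl, h₂ m₂ rfl⟩)
  · rcases o₂ with _ | m₂
    · exact Or.inl (Or.inr ⟨m₁, rfl, h₁ m₁ rfl⟩)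
    · by_cases he : m₁ = m₂
      · exact Or.inl (Or.inl (by rw [he]))
      · rcases wPref_total I (h₁ m₁ rfl) (h₂ m₂ rfl) he with hp | hp
        · exact Or.inl (Or.inr ⟨m₁, rfl, hp⟩)
        · exact Or.inr (Or.inr ⟨m₂, rfl, hp⟩)

/-- Consistency, forward direction. -/
lemma cons_mp [Finite M] [Finite W] {I : SMInstance M W} {μ μ' : Matching M W}
    (h : IsStable I μ) (h' : IsStable I μ') (m : M) (w : W)
    (hmw : pickWorse I m (μ.μm m) (μ'.μm m) = some w) :
    pickBetter I w (μ.μw w) (μ'.μw w) = some m := by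
  have hsome : μ.μm m = some w ∨ μ'.μm m = some w := by
    rcases pickWorse_or I m (μ.μm m) (μ'.μm m) with hc | hc
    · exact Or.inl (hc.symm.trans hmw)
    · exact Or.inr (hc.symm.trans hmw)
  obtain ⟨w₁, h1⟩ : ∃ w₁, μ.μm m = some w₁ := by
    rcases hsome with hs | hs
    · exact ⟨w, hs⟩
    · exact lone_wolf_m h' h hs
  obtain ⟨w₂, h2⟩ : ∃ w₂, μ'.μm m = some w₂ := by
    rcases hsome with hs | hs
    · exact lone_wolf_m h h' hs
    · exact ⟨w, hs⟩
  rw [h1, h2] at hmw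
  by_cases he : w₁ = w₂
  · subst he
    have hww : w = w₁ := by
      rcases pickWorse_or I m (some w₁) (some w₁) with hc | hc <;>
        rw [hc] at hmw <;> exact (Option.some.inj hmw).symm
    subst hww
    have ha : μ.μw w = some m := (μ.consistent m w).1 h1
    have hb : μ'.μw w = some m := (μ'.consistent m w).1 h2
    rw [ha, hb]
    rcases pickBetter_or I w (some m) (some m) with hc | hc <;> exact hc
  · have hmem1 : w₁ ∈ I.mpref m := (h.1 m w₁ h1).1
    have hmem2 : w₂ ∈ I.mpref m := (h'.1 m w₂ h2).1
    rcases mPref_total I hmem1 hmem2 he with hp | hp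
    · -- m strictly prefers w₁ = μ(m); so pickWorse = some w₂ and w = w₂
      have hq : I.mWeak m (some w₁) (some w₂) := Or.inr ⟨w₁, rfl, hp⟩
      have hww : w = w₂ := by
        rw [pickWorse_pos I m hq] at hmw; injection hmw with hh; exact hh.symm
      subst hww
      have hb : μ'.μw w = some m := (μ'.consistent m w).1 h2
      have hwp : I.wPref w m (μ.μw w) := cycleB h' h h2 h1 hp
      have hnw : ¬ I.wWeak w (μ.μw w) (μ'.μw w) := by
        rw [hb]
        rintro (heq | ⟨m', hm', hq'⟩)
        · rw [heq] at hwp; exact wPref_irrefl I w m hwp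
        · rw [hm'] at hwp; exact wPref_asymm I hwp hq'
      rw [pickBetter_neg I w hnw, hb]
    · -- m strictly prefers w₂ = μ'(m); so pickWorse = some w₁ and w = w₁
      have hq : ¬ I.mWeak m (some w₁) (some w₂) := by
        rintro (heq | ⟨w', hw', hq'⟩)
        · exact he (by injection heq)
        · injection hw' with hh
          rw [← hh] at hq'
          exact mPref_asymm I hp hq'
      have hww : w = w₁ := by
        rw [pickWorse_neg I m hq] at hmw; injection hmw with hh; exact hh.symm
      subst hww
      have ha : μ.μw w = some m := (μ.consistent m w).1 h1
      have hwp : I.wPref w m (μ'.μw w) := cycleB h h' h1 h2 hp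
      have hw : I.wWeak w (μ.μw w) (μ'.μw w) := Or.inr ⟨m, ha, hwp⟩
      rw [pickBetter_pos I w hw, ha]

/-- Consistency, reverse direction. -/
lemma cons_mpr [Finite M] [Finite W] {I : SMInstance M W} {μ μ' : Matching M W}
    (h : IsStable I μ) (h' : IsStable I μ') (m : M) (w : W)
    (hww : pickBetter I w (μ.μw w) (μ'.μw w) = some m) :
    pickWorse I m (μ.μm m) (μ'.μm m) = some w := by
  have hsome : μ.μw w = some m ∨ μ'.μw w = some m := by
    rcases pickBetter_or I w (μ.μw w) (μ'.μw w) with hc | hc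
    · exact Or.inl (hc.symm.trans hww)
    · exact Or.inr (hc.symm.trans hww)
  obtain ⟨m₁, g1⟩ : ∃ m₁, μ.μw w = some m₁ := by
    rcases hsome with hs | hs
    · exact ⟨m, hs⟩
    · exact lone_wolf_w h' h hs
  obtain ⟨m₂, g2⟩ : ∃ m₂, μ'.μw w = some m₂ := by
    rcases hsome with hs | hs
    · exact lone_wolf_w h h' hs
    · exact ⟨m, hs⟩
  rw [g1, g2] at hww
  by_cases he : m₁ = m₂
  · subst he
    have hmm : m = m₁ := by
      rcases pickBetter_or I w (some m₁) (some m₁) with hc | hc <;>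
        rw [hc] at hww <;> exact (Option.some.inj hww).symm
    subst hmm
    have ha : μ.μm m = some w := (μ.consistent m w).2 g1
    have hb : μ'.μm m = some w := (μ'.consistent m w).2 g2
    rw [ha, hb]
    rcases pickWorse_or I m (some w) (some w) with hc | hc <;> exact hc
  · have hmem1 : m₁ ∈ I.wpref w := (h.1 m₁ w ((μ.consistent m₁ w).2 g1)).2
    have hmem2 : m₂ ∈ I.wpref w := (h'.1 m₂ w ((μ'.consistent m₂ w).2 g2)).2
    rcases wPref_total I hmem1 hmem2 he with hp | hp
    · -- w strictly prefers m₁ = μ(w); pickBetter = some m₁, m = m₁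
      have hq : I.wWeak w (some m₁) (some m₂) := Or.inr ⟨m₁, rfl, hp⟩
      have hmm : m = m₁ := by
        rw [pickBetter_pos I w hq] at hww; injection hww with hh; exact hh.symm
      subst hmm
      have hμm : μ.μm m = some w := (μ.consistent m w).2 g1
      obtain ⟨w₂, hμ'm⟩ := lone_wolf_m h h' hμm
      have hwne : w₂ ≠ w := by
        intro heq
        rw [heq] at hμ'm
        have : μ'.μw w = some m := (μ'.consistent m w).1 hμ'm
        rw [g2] at this
        injection this with hh
        exact he hh.symm
      have hnq : ¬ I.mWeak m (some w) (some w₂) := by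
        rintro (heq | ⟨w', hw', hq'⟩)
        · exact hwne (by injection heq.symm)
        · injection hw' with hh
          rw [← hh] at hq'
          obtain ⟨m₂', hm₂', hq₂⟩ := opposite h h' hμm (by rw [hμ'm]; exact hq')
          rw [g2] at hm₂'
          injection hm₂' with hh2
          rw [← hh2] at hq₂
          exact wPref_asymm I hp hq₂
      rw [hμm, hμ'm, pickWorse_neg I m hnq]
    · -- w strictly prefers m₂ = μ'(w); pickBetter = some m₂, m = m₂
      have hnw : ¬ I.wWeak w (some m₁) (some m₂) := by
        rintro (heq | ⟨m', hm', hq'⟩)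
        · exact he (by injection heq)
        · injection hm' with hh
          rw [← hh] at hq'
          exact wPref_asymm I hp hq'
      have hmm : m = m₂ := by
        rw [pickBetter_neg I w hnw] at hww; injection hww with hh; exact hh.symm
      subst hmm
      have hμ'm : μ'.μm m = some w := (μ'.consistent m w).2 g2
      obtain ⟨w₃, hμm⟩ := lone_wolf_m h' h hμ'm
      have hwne : w₃ ≠ w := by
        intro heq
        rw [heq] at hμm
        have : μ.μw w = some m := (μ.consistent m w).1 hμm
        rw [g1] at this
        injection this with hh
        exact he hh
      have hq : I.mWeak m (some w₃) (some w) := by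
        by_contra hnq
        have hw₃mem : w₃ ∈ I.mpref m := (h.1 m w₃ hμm).1
        have hwmem : w ∈ I.mpref m := (h'.1 m w hμ'm).1
        rcases mPref_total I hw₃mem hwmem hwne with hpp | hpp
        · exact hnq (Or.inr ⟨w₃, rfl, hpp⟩)
        · obtain ⟨m₁', hm₁', hq₂⟩ := opposite h' h hμ'm (by rw [hμm]; exact hpp)
          rw [g1] at hm₁'
          injection hm₁' with hh2
          rw [← hh2] at hq₂
          exact wPref_asymm I hp hq₂
      rw [hμm, hμ'm, pickWorse_pos I m hq]

end ConwayAux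


/-- Conway's Lattice Theorem, meet part: the pointwise men-minimum
of two stable matchings is a well-defined matching and is stable. -/
theorem conway_meet {M W : Type*} [DecidableEq M] [DecidableEq W]
    [Fintype M] [Fintype W] (I : SMInstance M W) (μ μ' : Matching M W)
    (h : IsStable I μ) (h' : IsStable I μ') :
    ∃ ν : Matching M W, IsStable I ν ∧
      ∀ m, (ν.μm m = μ.μm m ∨ ν.μm m = μ'.μm m) ∧
        I.mWeak m (μ.μm m) (ν.μm m) ∧ I.mWeak m (μ'.μm m) (ν.μm m) := by
  classical
  have hcons : ∀ m w, ConwayAux.pickWorse I m (μ.μm m) (μ'.μm m) = some w ↔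
      ConwayAux.pickBetter I w (μ.μw w) (μ'.μw w) = some m :=
    fun m w => ⟨ConwayAux.cons_mp h h' m w, ConwayAux.cons_mpr h h' m w⟩
  refine ⟨⟨fun m => ConwayAux.pickWorse I m (μ.μm m) (μ'.μm m),
           fun w => ConwayAux.pickBetter I w (μ.μw w) (μ'.μw w), hcons⟩, ⟨?_, ?_⟩, ?_⟩
  · -- individually rational
    intro m w hmw
    dsimp only at hmw
    rcases ConwayAux.pickWorse_or I m (μ.μm m) (μ'.μm m) with hc | hc <;> rw [hc] at hmw
    · exact h.1 m w hmw
    · exact h'.1 m w hmw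
  · -- no blocking pair
    intro m w hbp
    obtain ⟨hne, hmp, hwp⟩ := hbp
    dsimp only at hne hmp hwp
    have hIR1 : ∀ m', μ.μw w = some m' → m' ∈ I.wpref w :=
      fun m' hh => (h.1 m' w ((μ.consistent m' w).2 hh)).2
    have hIR2 : ∀ m', μ'.μw w = some m' → m' ∈ I.wpref w :=
      fun m' hh => (h'.1 m' w ((μ'.consistent m' w).2 hh)).2
    have hge1 : I.wWeak w (ConwayAux.pickBetter I w (μ.μw w) (μ'.μw w)) (μ.μw w) := by
      by_cases hq : I.wWeak w (μ.μw w) (μ'.μw w)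
      · rw [ConwayAux.pickBetter_pos I w hq]; exact Or.inl rfl
      · rw [ConwayAux.pickBetter_neg I w hq]
        rcases ConwayAux.wWeak_total I hIR1 hIR2 with ht | ht
        · exact absurd ht hq
        · exact ht
    have hge2 : I.wWeak w (ConwayAux.pickBetter I w (μ.μw w) (μ'.μw w)) (μ'.μw w) := by
      by_cases hq : I.wWeak w (μ.μw w) (μ'.μw w)
      · rw [ConwayAux.pickBetter_pos I w hq]; exact hq
      · rw [ConwayAux.pickBetter_neg I w hq]; exact Or.inl rfl
    have hwp1 := ConwayAux.wPref_wWeak_trans I hwp hge1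
    have hwp2 := ConwayAux.wPref_wWeak_trans I hwp hge2
    rcases ConwayAux.pickWorse_or I m (μ.μm m) (μ'.μm m) with hc | hc <;> rw [hc] at hmp
    · have hne1 : μ.μm m ≠ some w := by
        intro he; rw [he] at hmp; exact ConwayAux.mPref_irrefl I m w hmp
      exact h.2 m w ⟨hne1, hmp, hwp1⟩
    · have hne2 : μ'.μm m ≠ some w := by
        intro he; rw [he] at hmp; exact ConwayAux.mPref_irrefl I m w hmp
      exact h'.2 m w ⟨hne2, hmp, hwp2⟩
  · -- the meet property
    intro m
    have hIRm1 : ∀ w', μ.μm m = some w' → w' ∈ I.mpref m := fun w' hh => (h.1 m w' hh).1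
    have hIRm2 : ∀ w', μ'.μm m = some w' → w' ∈ I.mpref m := fun w' hh => (h'.1 m w' hh).1
    refine ⟨ConwayAux.pickWorse_or I m _ _, ?_, ?_⟩
    · by_cases hq : I.mWeak m (μ.μm m) (μ'.μm m)
      · dsimp only; rw [ConwayAux.pickWorse_pos I m hq]; exact hq
      · dsimp only; rw [ConwayAux.pickWorse_neg I m hq]; exact Or.inl rfl
    · by_cases hq : I.mWeak m (μ.μm m) (μ'.μm m)
      · dsimp only; rw [ConwayAux.pickWorse_pos I m hq]; exact Or.inl rfl
      · dsimp only; rw [ConwayAux.pickWorse_neg I m hq]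
        rcases ConwayAux.mWeak_total I hIRm1 hIRm2 with ht | ht
        · exact absurd ht hq
        · exact ht
end

section
/- In any stable matching instance with strict preferences, all men prefer stable matching μ₁ weakly to stable matching μ₂ (pointwise) if and only if all women prefer μ₂ weakly to μ₁ (pointwise). Consequently, the men-optimal stable matching is the women-pessimal stable matching. -/
open List

/-- men and women have strictly opposite preferences over stable
matchings; consequently the men-optimal stable matching is women-pessimal. -/
theorem opposite_preferences {M W : Type*} [DecidableEq M] [DecidableEq W]
    [Fintype M] [Fintype W] (I : SMInstance M W) :
    (∀ μ₁ μ₂ : Matching M W, IsStable I μ₁ → IsStable I μ₂ →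
      ((∀ m, I.mWeak m (μ₁.μm m) (μ₂.μm m)) ↔ (∀ w, I.wWeak w (μ₂.μw w) (μ₁.μw w)))) ∧
    (∀ μ : Matching M W, IsMenOptimal I μ →
      ∀ μ', IsStable I μ' → ∀ w, I.wWeak w (μ'.μw w) (μ.μw w)) := by
  
  have forward : ∀ μ₁ μ₂ : Matching M W, IsStable I μ₁ → IsStable I μ₂ →
      (∀ m, I.mWeak m (μ₁.μm m) (μ₂.μm m)) → (∀ w, I.wWeak w (μ₂.μw w) (μ₁.μw w)) := by
    intro μ₁ μ₂ h₁ h₂ hM w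
    by_cases heq : μ₂.μw w = μ₁.μw w
    · exact Or.inl heq
    cases h1 : μ₁.μw w with
    | none =>
      cases h2 : μ₂.μw w with
      | none => rw [h1, h2] at heq; exact absurd rfl heq
      | some m₂ =>
        refine Or.inr ⟨m₂, rfl, ?_⟩
        exact (h₂.1 m₂ w ((μ₂.consistent m₂ w).mpr h2)).2
    | some m₁ =>
      have hm1 : μ₁.μm m₁ = some w := (μ₁.consistent m₁ w).mpr h1
      have hm1w : m₁ ∈ I.wpref w := (h₁.1 m₁ w hm1).2
      have hne2 : μ₂.μm m₁ ≠ some w := by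
        intro hc
        exact heq (((μ₂.consistent m₁ w).mp hc).trans h1.symm)
      have hpref : I.mPref m₁ w (μ₂.μm m₁) := by
        rcases hM m₁ with he | ⟨w', hw', hp⟩
        · rw [hm1] at he; exact absurd he.symm hne2
        · rw [hm1] at hw'
          obtain rfl : w = w' := by injection hw'
          exact hp
      have nwp : ¬ I.wPref w m₁ (μ₂.μw w) := fun hc => h₂.2 m₁ w ⟨hne2, hpref, hc⟩
      cases h2 : μ₂.μw w with
      | none => rw [h2] at nwp; exact absurd hm1w nwp
      | some m₂ =>
        rw [h2] at nwp
        have hm2w : m₂ ∈ I.wpref w := (h₂.1 m₂ w ((μ₂.consistent m₂ w).mpr h2)).2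
        have hle : (I.wpref w).idxOf m₂ ≤ (I.wpref w).idxOf m₁ := by
          by_contra hlt
          exact nwp ⟨hm1w, Or.inr (by omega)⟩
        have hne : m₂ ≠ m₁ := by
          intro hc; rw [h1, h2, hc] at heq; exact heq rfl
        have hlt : (I.wpref w).idxOf m₂ < (I.wpref w).idxOf m₁ := by
          rcases lt_or_eq_of_le hle with h | h
          · exact h
          · exact absurd ((List.idxOf_inj hm2w).mp h) hne
        exact Or.inr ⟨m₂, rfl, ⟨hm2w, Or.inr hlt⟩⟩
  have backward : ∀ μ₁ μ₂ : Matching M W, IsStable I μ₁ → IsStable I μ₂ →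
      (∀ w, I.wWeak w (μ₂.μw w) (μ₁.μw w)) → (∀ m, I.mWeak m (μ₁.μm m) (μ₂.μm m)) := by
    intro μ₁ μ₂ h₁ h₂ hW m
    by_cases heq : μ₁.μm m = μ₂.μm m
    · exact Or.inl heq
    cases h2 : μ₂.μm m with
    | none =>
      cases h1 : μ₁.μm m with
      | none => rw [h1, h2] at heq; exact absurd rfl heq
      | some w₁ =>
        refine Or.inr ⟨w₁, rfl, ?_⟩
        exact (h₁.1 m w₁ h1).1
    | some w₂ =>
      have hw2 : μ₂.μw w₂ = some m := (μ₂.consistent m w₂).mp h2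
      have hw2m : w₂ ∈ I.mpref m := (h₂.1 m w₂ h2).1
      have hne1 : μ₁.μw w₂ ≠ some m := by
        intro hc
        exact heq (((μ₁.consistent m w₂).mpr hc).trans h2.symm)
      have hpref : I.wPref w₂ m (μ₁.μw w₂) := by
        rcases hW w₂ with he | ⟨m', hm', hp⟩
        · rw [hw2] at he; exact absurd he.symm hne1
        · rw [hw2] at hm'
          obtain rfl : m = m' := by injection hm'
          exact hp
      have hnem : μ₁.μm m ≠ some w₂ := fun hc => hne1 ((μ₁.consistent m w₂).mp hc)
      have nwp : ¬ I.mPref m w₂ (μ₁.μm m) := fun hc => h₁.2 m w₂ ⟨hnem, hc, hpref⟩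
      cases h1 : μ₁.μm m with
      | none => rw [h1] at nwp; exact absurd hw2m nwp
      | some w₁ =>
        rw [h1] at nwp
        have hw1m : w₁ ∈ I.mpref m := (h₁.1 m w₁ h1).1
        have hle : (I.mpref m).idxOf w₁ ≤ (I.mpref m).idxOf w₂ := by
          by_contra hlt
          exact nwp ⟨hw2m, Or.inr (by omega)⟩
        have hne : w₁ ≠ w₂ := by
          intro hc; rw [h1, h2, hc] at heq; exact heq rfl
        have hlt : (I.mpref m).idxOf w₁ < (I.mpref m).idxOf w₂ := by
          rcases lt_or_eq_of_le hle with h | h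
          · exact h
          · exact absurd ((List.idxOf_inj hw1m).mp h) hne
        exact Or.inr ⟨w₁, rfl, ⟨hw1m, Or.inr hlt⟩⟩
  refine ⟨fun μ₁ μ₂ h₁ h₂ => ⟨forward μ₁ μ₂ h₁ h₂, backward μ₁ μ₂ h₁ h₂⟩, ?_⟩
  intro μ hμ μ' hμ' w
  exact forward μ μ' hμ.1 hμ' (hμ.2 μ' hμ') w
end

section
/- Let each manipulator in a set L of women truncate her true preference list by deleting every man ranked strictly below her women-optimal stable partner (under the true profile), while all other agents report truthfully. Then in the men-proposing Gale-Shapley outcome of the reported profile, every manipulator is matched to her women-optimal stable partner (with respect to the true profile). -/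
open List

lemma aux_idxOf_take_lt {α} [DecidableEq α] :
    ∀ (l : List α) (n : ℕ) (x : α), x ∈ l.take n → l.idxOf x < n := by
  intro l
  induction l with
  | nil => simp
  | cons a t ih =>
    intro n x hx
    cases n with
    | zero => simp at hx
    | succ n =>
      rw [List.take_succ_cons, List.mem_cons] at hx
      rcases hx with rfl | hx
      · rw [List.idxOf_cons_self]; omega
      · by_cases h : x = a
        · subst h; rw [List.idxOf_cons_self]; omega
        · rw [List.idxOf_cons_ne _ (Ne.symm h)]
          exact Nat.succ_lt_succ (ih n x hx)

lemma aux_idxOf_take_eq {α} [DecidableEq α] :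
    ∀ (l : List α) (n : ℕ) (x : α), x ∈ l.take n → (l.take n).idxOf x = l.idxOf x := by
  intro l
  induction l with
  | nil => simp
  | cons a t ih =>
    intro n x hx
    cases n with
    | zero => simp at hx
    | succ n =>
      rw [List.take_succ_cons] at hx ⊢
      by_cases h : x = a
      · subst h; rw [List.idxOf_cons_self, List.idxOf_cons_self]
      · rw [List.idxOf_cons_ne _ (Ne.symm h), List.idxOf_cons_ne _ (Ne.symm h)]
        rw [List.mem_cons] at hx
        rcases hx with rfl | hx
        · exact absurd rfl h
        · rw [ih n x hx]

lemma aux_mem_take_of_idxOf_lt {α} [DecidableEq α] :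
    ∀ (l : List α) (n : ℕ) (x : α), x ∈ l → l.idxOf x < n → x ∈ l.take n := by
  intro l
  induction l with
  | nil => simp
  | cons a t ih =>
    intro n x hx hn
    by_cases h : x = a
    · subst h
      cases n with
      | zero => rw [List.idxOf_cons_self] at hn; omega
      | succ n => rw [List.take_succ_cons]; exact List.mem_cons_self
    · rw [List.idxOf_cons_ne _ (Ne.symm h)] at hn
      cases n with
      | zero => omega
      | succ n =>
        rw [List.take_succ_cons, List.mem_cons]
        rw [List.mem_cons] at hx
        rcases hx with rfl | hx
        · exact absurd rfl h
        · exact Or.inr (ih n x hx (by omega))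

lemma aux_card_matched {M W : Type*} [DecidableEq M] [DecidableEq W] [Fintype M] [Fintype W]
    (μ : Matching M W) :
    (Finset.univ.filter (fun w : W => (μ.μw w).isSome)).card
      = (Finset.univ.filter (fun m : M => (μ.μm m).isSome)).card := by
  apply Finset.card_bij (fun w hw => (μ.μw w).get (by simpa using (Finset.mem_filter.mp hw).2))
  · intro w hw
    have hws : (μ.μw w).isSome := by simpa using (Finset.mem_filter.mp hw).2
    obtain ⟨m, hm⟩ := Option.isSome_iff_exists.mp hws
    have hc := (μ.consistent m w).mpr hm
    simp only [Finset.mem_filter, Finset.mem_univ, true_and]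
    simp [hm, hc]
  · intro w1 h1 w2 h2 heq
    have hs1 : (μ.μw w1).isSome := by simpa using (Finset.mem_filter.mp h1).2
    have hs2 : (μ.μw w2).isSome := by simpa using (Finset.mem_filter.mp h2).2
    obtain ⟨m1, hm1⟩ := Option.isSome_iff_exists.mp hs1
    obtain ⟨m2, hm2⟩ := Option.isSome_iff_exists.mp hs2
    simp only [hm1, hm2, Option.get_some] at heq
    subst heq
    have c1 := (μ.consistent m1 w1).mpr hm1
    have c2 := (μ.consistent m1 w2).mpr hm2
    rw [c1] at c2
    exact Option.some_injective _ c2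
  · intro m hm
    simp only [Finset.mem_filter, Finset.mem_univ, true_and] at hm
    obtain ⟨w, hw⟩ := Option.isSome_iff_exists.mp hm
    have hww : μ.μw w = some m := (μ.consistent m w).mp hw
    refine ⟨w, by simp [Finset.mem_filter, hww], ?_⟩
    simp [hww]

/-- if each manipulator truncates her true list right below her
women-optimal stable partner, then in the men-optimal stable matching of the
reported profile every manipulator gets her women-optimal stable partner. -/
theorem trunc_at_woptimal {M W : Type*} [DecidableEq M] [DecidableEq W]
    [Fintype M] [Fintype W] (I I' : SMInstance M W) (L : Set W) (μW μ' : Matching M W)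
    (hG : GeneralManip I I' L) (hW : IsWomenOptimal I μW)
    (htrunc : ∀ w ∈ L, ∃ m, μW.μw w = some m ∧
      I'.wpref w = (I.wpref w).take ((I.wpref w).idxOf m + 1))
    (hopt : IsMenOptimal I' μ') :
    ∀ w ∈ L, μ'.μw w = μW.μw w := by
  obtain ⟨hmpref, hwpref⟩ := hG
  obtain ⟨hWstable, hWopt⟩ := hW
  obtain ⟨hW_IR, hW_noblock⟩ := hWstable
  obtain ⟨h'stable, h'opt⟩ := hopt
  obtain ⟨h'_IR, h'_noblock⟩ := h'stable
  -- every reported list is a sub-collection of the true one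
  have hsub : ∀ w, ∀ m ∈ I'.wpref w, m ∈ I.wpref w := by
    intro w m hm
    by_cases hwL : w ∈ L
    · obtain ⟨mw, hmw, heq⟩ := htrunc w hwL
      rw [heq] at hm
      exact List.mem_of_mem_take hm
    · rw [hwpref w hwL] at hm; exact hm
  -- men's preferences are identical
  have hmPref_eq : ∀ m w o, I'.mPref m w o ↔ I.mPref m w o := by
    intro m w o
    cases o <;> simp [SMInstance.mPref, hmpref]
  -- μW is individually rational for I'
  have hμW_IR' : IndivRational I' μW := by
    intro m w hm
    have h1 := hW_IR m w hm
    refine ⟨by rw [hmpref]; exact h1.1, ?_⟩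
    by_cases hwL : w ∈ L
    · obtain ⟨mw, hmw, heq⟩ := htrunc w hwL
      have hmmw : m = mw := by
        have h2 := (μW.consistent m w).mp hm
        rw [h2] at hmw
        exact Option.some_injective _ hmw
      subst hmmw
      rw [heq]
      exact aux_mem_take_of_idxOf_lt _ _ _ h1.2 (Nat.lt_succ_self _)
    · rw [hwpref w hwL]; exact h1.2
  -- μW is stable for I'
  have hμW_stable' : IsStable I' μW := by
    refine ⟨hμW_IR', ?_⟩
    intro m w hb
    obtain ⟨hne, hmp, hwp⟩ := hb
    apply hW_noblock m w
    refine ⟨hne, (hmPref_eq m w _).mp hmp, ?_⟩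
    by_cases hwL : w ∈ L
    · obtain ⟨mw, hmw, heq⟩ := htrunc w hwL
      rw [hmw] at hwp ⊢
      obtain ⟨hmem', hor⟩ := hwp
      have hmwmem : mw ∈ I.wpref w :=
        (hW_IR mw w ((μW.consistent mw w).mpr hmw)).2
      have hmw' : mw ∈ I'.wpref w := by
        rw [heq]
        exact aux_mem_take_of_idxOf_lt _ _ _ hmwmem (Nat.lt_succ_self _)
      have hlt : (I'.wpref w).idxOf m < (I'.wpref w).idxOf mw := by
        rcases hor with h | h
        · exact absurd hmw' h
        · exact h
      rw [heq] at hmem' hmw' hlt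
      rw [aux_idxOf_take_eq _ _ _ hmem', aux_idxOf_take_eq _ _ _ hmw'] at hlt
      exact ⟨List.mem_of_mem_take hmem', Or.inr hlt⟩
    · have hwPref_eq : ∀ o, I'.wPref w m o ↔ I.wPref w m o := by
        intro o; cases o <;> simp [SMInstance.wPref, hwpref w hwL]
      exact (hwPref_eq _).mp hwp
  -- μ' is weakly better for every man than μW
  have hbetter : ∀ m, I'.mWeak m (μ'.μm m) (μW.μm m) := h'opt μW hμW_stable'
  -- a matched pair in μ' where the woman is strictly better than in μW blocks μW
  have hblock : ∀ p w, μ'.μm p = some w → μW.μm p ≠ some w →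
      SMInstance.wPref I w p (μW.μw w) → False := by
    intro p w hpm hne hwp
    rcases hbetter p with heq | ⟨w'', hw'', hmp⟩
    · rw [hpm] at heq; exact hne heq.symm
    · rw [hpm] at hw''
      have hww : w'' = w := Option.some_injective _ hw''.symm
      rw [hww] at hmp
      exact hW_noblock p w ⟨hne, (hmPref_eq p w _).mp hmp, hwp⟩
  -- women matched in μ' are matched in μW
  have hAB : ∀ w : W, (μ'.μw w).isSome → (μW.μw w).isSome := by
    intro w hw
    obtain ⟨p, hp⟩ := Option.isSome_iff_exists.mp hw
    have hpm : μ'.μm p = some w := (μ'.consistent p w).mpr hp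
    by_contra hnone
    have hWnone : μW.μw w = none := by
      cases h : μW.μw w with
      | none => rfl
      | some q => rw [h] at hnone; simp at hnone
    have hpmem : p ∈ I.wpref w := hsub w p (h'_IR p w hpm).2
    have hne : μW.μm p ≠ some w := by
      intro h
      rw [(μW.consistent p w).mp h] at hWnone
      exact Option.some_ne_none _ hWnone
    exact hblock p w hpm hne (by rw [hWnone]; exact hpmem)
  -- men matched in μW are matched in μ'
  have hCD : ∀ m : M, (μW.μm m).isSome → (μ'.μm m).isSome := by
    intro m hm
    rcases hbetter m with heq | ⟨w'', hw'', _⟩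
    · rw [heq]; exact hm
    · rw [hw'']; rfl
  -- rural hospitals: women matched in μW are matched in μ'
  have hBA : ∀ w : W, (μW.μw w).isSome → (μ'.μw w).isSome := by
    have hAB' : (Finset.univ.filter (fun w : W => (μ'.μw w).isSome)) ⊆
        (Finset.univ.filter (fun w : W => (μW.μw w).isSome)) := by
      intro w hw
      simp only [Finset.mem_filter, Finset.mem_univ, true_and] at hw ⊢
      exact hAB w hw
    have hCD' : (Finset.univ.filter (fun m : M => (μW.μm m).isSome)) ⊆
        (Finset.univ.filter (fun m : M => (μ'.μm m).isSome)) := by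
      intro m hm
      simp only [Finset.mem_filter, Finset.mem_univ, true_and] at hm ⊢
      exact hCD m hm
    have hcard : (Finset.univ.filter (fun w : W => (μW.μw w).isSome)).card ≤
        (Finset.univ.filter (fun w : W => (μ'.μw w).isSome)).card := by
      rw [aux_card_matched μW, aux_card_matched μ']
      exact Finset.card_le_card hCD'
    have heqset := Finset.eq_of_subset_of_card_le hAB' hcard
    intro w hw
    have : w ∈ (Finset.univ.filter (fun w : W => (μW.μw w).isSome)) := by
      simp only [Finset.mem_filter, Finset.mem_univ, true_and]; exact hw
    rw [← heqset] at this
    simpa using this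
  -- conclusion
  intro w hwL
  obtain ⟨mw, hμWw, heq⟩ := htrunc w hwL
  rw [hμWw]
  have hmatched : (μ'.μw w).isSome := hBA w (by rw [hμWw]; rfl)
  obtain ⟨p, hp⟩ := Option.isSome_iff_exists.mp hmatched
  rw [hp]
  have hpm : μ'.μm p = some w := (μ'.consistent p w).mpr hp
  have hpmem' : p ∈ I'.wpref w := (h'_IR p w hpm).2
  rw [heq] at hpmem'
  have hpmem : p ∈ I.wpref w := List.mem_of_mem_take hpmem'
  have hmwmem : mw ∈ I.wpref w := (hW_IR mw w ((μW.consistent mw w).mpr hμWw)).2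
  by_cases hpeq : p = mw
  · rw [hpeq]
  · exfalso
    have hle : (I.wpref w).idxOf p < (I.wpref w).idxOf mw + 1 :=
      aux_idxOf_take_lt _ _ _ hpmem'
    have hlt : (I.wpref w).idxOf p < (I.wpref w).idxOf mw := by
      rcases Nat.lt_or_ge ((I.wpref w).idxOf p) ((I.wpref w).idxOf mw) with h | h
      · exact h
      · exact absurd ((List.idxOf_inj (y := mw) hpmem).mp (by omega)) hpeq
    have hne : μW.μm p ≠ some w := by
      intro h
      have := (μW.consistent p w).mp h
      rw [hμWw] at this
      exact hpeq (Option.some_injective _ this.symm)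
    exact hblock p w hpm hne (by rw [hμWw]; exact ⟨hpmem, Or.inr hlt⟩)
end
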